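/- arXiv:2510.11453 — 4 statements merged into one kernel-verified Lean document; each statement's English description precedes it below -/
import Mathlib

section
/- Gaussian bound on f_s(L_q): Let f(x) = exp(−πx²) be the Gaussian, extended multiplicatively to ℝ², with f_s(x) := f(x/s). Let r₀ := √(ln 4/π). For any real s and positive integer q with r₀ < s < q/r₀, it holds that 1/f_s(L_q) > (√2/s)·E_q(s)², where L_q := ∪_{z∈ℤ}((z,z) + qℤ²), E(r) := 1 − 2exp(−πr²/2), and E_q(s) := √(E(q/s)·E(s)). -/
noncomputable section

/-- The Gaussian function `f(x) = exp(-πx²)`. -/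
def gauss (x : ℝ) : ℝ := Real.exp (-(Real.pi * x ^ 2))

/-- The lattice `L_q = ∪_{z∈ℤ} ((z,z) + qℤ²) ⊂ ℝ²`. -/
def LqSet (q : ℕ) : Set (ℝ × ℝ) :=
  {v | ∃ z w₁ w₂ : ℤ, v.1 = z + q * w₁ ∧ v.2 = z + q * w₂}

/-- `f_s(L_q)`: the sum over `L_q` of the multiplicative extension of `f` to `ℝ²`,
scaled by `s` (i.e. `f_s(x) = f(x/s)`). -/
def fsLq (f : ℝ → ℝ) (s : ℝ) (q : ℕ) : ℝ :=
  ∑' v : LqSet q, f ((v : ℝ × ℝ).1 / s) * f ((v : ℝ × ℝ).2 / s)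

/-- `r₀ = √(ln 4/π)`. -/
def r₀ : ℝ := Real.sqrt (Real.log 4 / Real.pi)

/-- The "fudge factor" `E(r) = 1 − 2exp(−πr²/2)`. -/
def Eg (r : ℝ) : ℝ := 1 - 2 * Real.exp (-(Real.pi * r ^ 2) / 2)

/-- `E_q(s) = √(E(q/s)·E(s))`. -/
def Egq (q : ℕ) (s : ℝ) : ℝ := Real.sqrt (Eg (q / s) * Eg s)


open Real

namespace GaussProofAux

/-- Theta-like sum. -/
def S (u : ℝ) : ℝ := ∑' n : ℤ, Real.exp (-(π * u) * (n : ℝ) ^ 2)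

lemma term_eq (u : ℝ) (n : ℤ) :
    Real.exp (-(π * u) * (n : ℝ) ^ 2) = Real.exp (-(π * u)) ^ (n.natAbs ^ 2) := by
  rw [← Real.exp_nat_mul]
  congr 1
  have h : ((n.natAbs : ℝ)) ^ 2 = (n : ℝ) ^ 2 := by
    have : ((n.natAbs : ℝ)) = |(n : ℝ)| := by
      rw [Nat.cast_natAbs]; push_cast; ring
    rw [this, sq_abs]
  push_cast
  rw [h]; ring

lemma summable_pow_sq {x : ℝ} (h0 : 0 ≤ x) (h1 : x < 1) :
    Summable (fun n : ℕ => x ^ (n ^ 2)) := by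
  refine Summable.of_nonneg_of_le (fun n => pow_nonneg h0 _)
    (fun n => pow_le_pow_of_le_one h0 h1.le (Nat.le_self_pow two_ne_zero n))
    (summable_geometric_of_lt_one h0 h1)

lemma summable_S {u : ℝ} (hu : 0 < u) :
    Summable (fun n : ℤ => Real.exp (-(π * u) * (n : ℝ) ^ 2)) := by
  have hx0 : (0:ℝ) ≤ Real.exp (-(π * u)) := (Real.exp_pos _).le
  have hx1 : Real.exp (-(π * u)) < 1 := by
    rw [Real.exp_lt_one_iff]
    have := Real.pi_pos
    nlinarith
  apply Summable.of_nat_of_neg_add_one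
  · simp_rw [term_eq, Int.natAbs_natCast]
    exact summable_pow_sq hx0 hx1
  · simp_rw [term_eq]
    have hNA : ∀ n : ℕ, ((-((n:ℤ) + 1)).natAbs) = n + 1 := by
      intro n; omega
    simp_rw [hNA]
    have := (summable_pow_sq hx0 hx1).comp_injective (add_left_injective 1)
    simpa [Function.comp_def] using this


lemma S_term_nonneg (u : ℝ) (n : ℤ) : 0 ≤ Real.exp (-(π * u) * (n : ℝ) ^ 2) :=
  (Real.exp_pos _).le

lemma one_le_S {u : ℝ} (hu : 0 < u) : 1 ≤ S u := by
  have h := Summable.le_tsum (summable_S hu) 0 (fun j _ => S_term_nonneg u j)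
  rw [S]
  simpa using h

lemma S_pos {u : ℝ} (hu : 0 < u) : 0 < S u := lt_of_lt_of_le one_pos (one_le_S hu)

lemma S_mono {u v : ℝ} (hv : 0 < v) (h : v ≤ u) : S u ≤ S v := by
  refine Summable.tsum_le_tsum (fun n => ?_) (summable_S (lt_of_lt_of_le hv h)) (summable_S hv)
  apply Real.exp_le_exp.2
  have hn : (0:ℝ) ≤ (n:ℝ)^2 := sq_nonneg _
  nlinarith [Real.pi_pos, mul_le_mul_of_nonneg_right h hn]

lemma S_poisson {u : ℝ} (hu : 0 < u) : S u = (1 / Real.sqrt u) * S (1 / u) := by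
  have h := Real.tsum_exp_neg_mul_int_sq hu
  rw [S, S, Real.sqrt_eq_rpow]
  have h1 : ∀ n : ℤ, -(π * u) * (n:ℝ)^2 = -π * u * (n:ℝ)^2 := fun n => by ring
  have h2 : ∀ n : ℤ, -(π * (1/u)) * (n:ℝ)^2 = -π / u * (n:ℝ)^2 := fun n => by
    field_simp
  simp_rw [h1, h2]
  exact h

lemma S_le_two_S {u : ℝ} (hu : 0 < u) : S u ≤ 2 * S (4 * u) := by
  have h4u : 0 < 4 * u := by linarith
  rw [S_poisson hu, S_poisson h4u]
  have hs4 : Real.sqrt (4 * u) = 2 * Real.sqrt u := by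
    rw [show (4:ℝ) * u = 2^2 * u by ring, Real.sqrt_mul (by positivity), Real.sqrt_sq (by norm_num : (0:ℝ) ≤ 2)]
  rw [hs4]
  have hmono : S (1 / u) ≤ S (1 / (4 * u)) := by
    apply S_mono (by positivity)
    rw [div_le_div_iff₀ (by positivity) hu]
    nlinarith
  have hsu : 0 < Real.sqrt u := Real.sqrt_pos.2 hu
  calc 1 / Real.sqrt u * S (1 / u) ≤ 1 / Real.sqrt u * S (1 / (4 * u)) := by
        apply mul_le_mul_of_nonneg_left hmono (by positivity)
    _ = 2 * (1 / (2 * Real.sqrt u) * S (1 / (4 * u))) := by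
        field_simp

lemma S_eq {u : ℝ} (hu : 0 < u) :
    S u = 1 + 2 * ∑' n : ℕ, Real.exp (-(π * u)) ^ ((n + 1) ^ 2) := by
  have hx0 : (0:ℝ) ≤ Real.exp (-(π * u)) := (Real.exp_pos _).le
  have hx1 : Real.exp (-(π * u)) < 1 := by
    rw [Real.exp_lt_one_iff]; nlinarith [Real.pi_pos]
  have hsn : Summable (fun n : ℕ => Real.exp (-(π * u)) ^ (n ^ 2)) :=
    summable_pow_sq hx0 hx1
  have hss : Summable (fun n : ℕ => Real.exp (-(π * u)) ^ ((n + 1) ^ 2)) := by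
    have := hsn.comp_injective (add_left_injective 1)
    simpa [Function.comp_def] using this
  rw [S]
  rw [tsum_of_nat_of_neg_add_one
    (by simp_rw [term_eq, Int.natAbs_natCast]; exact hsn)
    (by
      simp_rw [term_eq]
      have hNA : ∀ n : ℕ, ((-((n:ℤ) + 1)).natAbs) = n + 1 := fun n => by omega
      simp_rw [hNA]; exact hss)]
  simp_rw [term_eq]
  have hNA : ∀ n : ℕ, ((-((n:ℤ) + 1)).natAbs) = n + 1 := fun n => by omega
  simp_rw [hNA, Int.natAbs_natCast]
  rw [Summable.tsum_eq_zero_add hsn]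
  push_cast
  rw [pow_zero]
  ring

lemma r0_pos : 0 < Real.sqrt (Real.log 4 / Real.pi) := by
  apply Real.sqrt_pos.2
  apply div_pos _ Real.pi_pos
  apply Real.log_pos; norm_num

lemma x_lt_half {r : ℝ} (hr : Real.sqrt (Real.log 4 / Real.pi) < r) :
    Real.exp (-(π * r ^ 2) / 2) < 1 / 2 := by
  have h0 : (0:ℝ) ≤ Real.log 4 / Real.pi :=
    div_nonneg (Real.log_nonneg (by norm_num)) Real.pi_pos.le
  have hrr : Real.log 4 / Real.pi < r ^ 2 := by
    have := Real.sq_sqrt h0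
    nlinarith [r0_pos, hr]
  have hlog4 : Real.log 4 = 2 * Real.log 2 := by
    rw [show (4:ℝ) = 2 ^ 2 by norm_num, Real.log_pow]; push_cast; ring
  have hπ : Real.log 4 < Real.pi * r ^ 2 := by
    rw [div_lt_iff₀ Real.pi_pos] at hrr
    linarith [hrr]
  have : -(π * r ^ 2) / 2 < -Real.log 2 := by
    rw [hlog4] at hπ; linarith
  calc Real.exp (-(π * r ^ 2) / 2) < Real.exp (-Real.log 2) := Real.exp_lt_exp.2 this
    _ = 1 / 2 := by
        rw [Real.exp_neg, Real.exp_log] <;> norm_num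

lemma S_lt_bound {r : ℝ} (hr : Real.sqrt (Real.log 4 / Real.pi) < r) :
    S (r ^ 2 / 2) < 1 / (1 - 2 * Real.exp (-(π * r ^ 2) / 2)) := by
  set x := Real.exp (-(π * r ^ 2) / 2) with hxdef
  have hx0 : 0 < x := Real.exp_pos _
  have hxh : x < 1 / 2 := x_lt_half hr
  have hx1 : x < 1 := by linarith
  have hu : 0 < r ^ 2 / 2 := by
    nlinarith [r0_pos, hr, Real.sqrt_nonneg (Real.log 4 / Real.pi)]
  have hxe : Real.exp (-(π * (r ^ 2 / 2))) = x := by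
    rw [hxdef]; congr 1; ring
  have hT : ∑' n : ℕ, x ^ ((n + 1) ^ 2) ≤ x / (1 - x) := by
    have hgeo : ∑' n : ℕ, x ^ (n + 1) = x / (1 - x) := by
      have h1 : ∀ n : ℕ, x ^ (n + 1) = x ^ n * x := fun n => by rw [pow_succ]
      simp_rw [h1]
      rw [tsum_mul_right, tsum_geometric_of_lt_one hx0.le hx1]
      rw [inv_eq_one_div]; ring
    rw [← hgeo]
    refine Summable.tsum_le_tsum (fun n => ?_) ?_ ?_
    · exact pow_le_pow_of_le_one hx0.le hx1.le (Nat.le_self_pow two_ne_zero _)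
    · have := summable_pow_sq hx0.le hx1
      have h2 := this.comp_injective (add_left_injective 1)
      simpa [Function.comp_def] using h2
    · have := summable_geometric_of_lt_one hx0.le hx1
      have h2 := this.comp_injective (add_left_injective 1)
      simpa [Function.comp_def] using h2
  have hSeq : S (r ^ 2 / 2) = 1 + 2 * ∑' n : ℕ, x ^ ((n + 1) ^ 2) := by
    rw [S_eq hu, hxe]
  rw [hSeq]
  have hden1 : 0 < 1 - x := by linarith
  have hden2 : 0 < 1 - 2 * x := by linarith
  have hfrac : x / (1 - x) < x / (1 - 2 * x) := by
    apply div_lt_div_of_pos_left hx0 hden2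
    linarith
  have : 1 + 2 * (x / (1 - 2 * x)) = 1 / (1 - 2 * x) := by
    field_simp
    ring
  linarith [hT, hfrac]

lemma even_term (u : ℝ) (a : ℤ) :
    Real.exp (-(π * u) * ((2 * a : ℤ) : ℝ) ^ 2) = Real.exp (-(π * (4 * u)) * (a : ℝ) ^ 2) := by
  congr 1; push_cast; ring

lemma even_sum {u : ℝ} (hu : 0 < u) :
    ∑' a : ℤ, Real.exp (-(π * u) * ((2 * a : ℤ) : ℝ) ^ 2) = S (4 * u) := by
  rw [S]; exact tsum_congr (even_term u)

lemma summable_even {u : ℝ} (hu : 0 < u) :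
    Summable (fun a : ℤ => Real.exp (-(π * u) * ((2 * a : ℤ) : ℝ) ^ 2)) := by
  have h4 : (0:ℝ) < 4 * u := by linarith
  have := summable_S h4
  apply this.congr
  intro a; exact (even_term u a).symm

lemma summable_odd {u : ℝ} (hu : 0 < u) :
    Summable (fun a : ℤ => Real.exp (-(π * u) * ((2 * a + 1 : ℤ) : ℝ) ^ 2)) := by
  have hinj : Function.Injective (fun a : ℤ => 2 * a + 1) := by
    intro a b h; dsimp only at h; omega
  exact (summable_S hu).comp_injective hinj

lemma odd_sum_le {u : ℝ} (hu : 0 < u) :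
    ∑' a : ℤ, Real.exp (-(π * u) * ((2 * a + 1 : ℤ) : ℝ) ^ 2) ≤ S (4 * u) := by
  set g := fun n : ℤ => Real.exp (-(π * u) * (n : ℝ) ^ 2) with hgdef
  have hg : Summable g := summable_S hu
  have hinjE : Function.Injective (fun a : ℤ => 2 * a) := by
    intro a b h; dsimp only at h; omega
  have hinjO : Function.Injective (fun a : ℤ => 2 * a + 1) := by
    intro a b h; dsimp only at h; omega
  have hcompl : (Set.range (fun a : ℤ => 2 * a))ᶜ = Set.range (fun a : ℤ => 2 * a + 1) := by
    ext n
    simp only [Set.mem_compl_iff, Set.mem_range]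
    constructor
    · intro h
      rcases Int.even_or_odd n with ⟨m, hm⟩ | ⟨m, hm⟩
      · exact absurd ⟨m, by omega⟩ h
      · exact ⟨m, by omega⟩
    · rintro ⟨m, rfl⟩ ⟨m', hm'⟩; omega
  have hkey := Summable.tsum_add_tsum_compl (s := Set.range (fun a : ℤ => 2 * a))
    (hg.subtype _) (hg.subtype _)
  rw [hcompl] at hkey
  rw [tsum_range g hinjE, tsum_range g hinjO] at hkey
  have hEval : ∑' a : ℤ, g (2 * a) = S (4 * u) := even_sum hu
  have h2 := S_le_two_S hu
  have hSu : ∑' n : ℤ, g n = S u := rfl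
  rw [hSu, hEval] at hkey
  have : ∑' a : ℤ, g (2 * a + 1) ≤ S (4 * u) := by linarith
  exact this

lemma inner_sum_le {u : ℝ} (hu : 0 < u) (r : ℤ) :
    Summable (fun a : ℤ => Real.exp (-(π * u) * ((2 * a + r : ℤ) : ℝ) ^ 2)) ∧
    ∑' a : ℤ, Real.exp (-(π * u) * ((2 * a + r : ℤ) : ℝ) ^ 2) ≤ S (4 * u) := by
  set g := fun n : ℤ => Real.exp (-(π * u) * (n : ℝ) ^ 2) with hgdef
  rcases Int.even_or_odd r with ⟨m, hm⟩ | ⟨m, hm⟩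
  · have hfun : (fun a : ℤ => g (2 * a + r)) = (fun a : ℤ => g (2 * a)) ∘ (fun a : ℤ => a + m) := by
      funext a
      simp only [Function.comp_apply]
      congr 1
      omega
    have hsum : Summable (fun a : ℤ => g (2 * a + r)) := by
      rw [hfun]
      exact (summable_even hu).comp_injective (add_left_injective m)
    refine ⟨hsum, ?_⟩
    have heq : ∑' a : ℤ, g (2 * a + r) = ∑' a : ℤ, g (2 * a) := by
      rw [hfun]
      exact (Equiv.addRight m).tsum_eq (fun a : ℤ => g (2 * a))
    rw [heq, even_sum hu]
  · have hfun : (fun a : ℤ => g (2 * a + r)) = (fun a : ℤ => g (2 * a + 1)) ∘ (fun a : ℤ => a + m) := by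
      funext a
      simp only [Function.comp_apply]
      congr 1
      omega
    have hsum : Summable (fun a : ℤ => g (2 * a + r)) := by
      rw [hfun]
      exact (summable_odd hu).comp_injective (add_left_injective m)
    refine ⟨hsum, ?_⟩
    have heq : ∑' a : ℤ, g (2 * a + r) = ∑' a : ℤ, g (2 * a + 1) := by
      rw [hfun]
      exact (Equiv.addRight m).tsum_eq (fun a : ℤ => g (2 * a + 1))
    rw [heq]
    exact odd_sum_le hu

end GaussProofAux

namespace GaussProofAux

/-- Parametrization of the lattice `L_q` by `ℤ × ℤ`. -/
def latEquiv (q : ℕ) (hq : 0 < q) : ℤ × ℤ ≃ LqSet q :=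
  Equiv.ofBijective
    (fun p => ⟨((p.2 : ℝ), ((p.2 + (q : ℤ) * p.1 : ℤ) : ℝ)),
      ⟨p.2, 0, p.1, by push_cast; ring, by push_cast; ring⟩⟩)
    (by
      constructor
      · rintro ⟨k₁, a₁⟩ ⟨k₂, a₂⟩ h
        simp only [Subtype.mk.injEq, Subtype.ext_iff, Prod.mk.injEq] at h
        obtain ⟨h1, h2⟩ := h
        have ha : a₁ = a₂ := by exact_mod_cast h1
        have h2' : (a₁ + (q : ℤ) * k₁ : ℤ) = (a₂ + (q : ℤ) * k₂ : ℤ) := by exact_mod_cast h2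
        have hq' : (q : ℤ) ≠ 0 := by exact_mod_cast hq.ne'
        have hk : k₁ = k₂ := by
          subst ha
          exact mul_left_cancel₀ hq' (add_left_cancel h2')
        simp [ha, hk]
      · rintro ⟨⟨x, y⟩, z, w₁, w₂, hx, hy⟩
        refine ⟨(w₂ - w₁, z + (q : ℤ) * w₁), ?_⟩
        apply Subtype.ext
        apply Prod.ext
        · show ((z + (q : ℤ) * w₁ : ℤ) : ℝ) = x
          rw [show x = ((z : ℝ) + (q : ℝ) * (w₁ : ℝ)) from hx]; push_cast; ring
        · show (((z + (q : ℤ) * w₁) + (q : ℤ) * (w₂ - w₁) : ℤ) : ℝ) = y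
          rw [show y = ((z : ℝ) + (q : ℝ) * (w₂ : ℝ)) from hy]; push_cast; ring)

/-- The summand of the lattice sum, after completing the square. -/
def Fq (q : ℕ) (s : ℝ) (p : ℤ × ℤ) : ℝ :=
  Real.exp (-(π * ((q : ℝ) ^ 2 / (2 * s ^ 2))) * (p.1 : ℝ) ^ 2) *
    Real.exp (-(π * (1 / (2 * s ^ 2))) * ((2 * p.2 + (q : ℤ) * p.1 : ℤ) : ℝ) ^ 2)

lemma Fq_eq (q : ℕ) (s : ℝ) (k a : ℤ) :
    Fq q s (k, a) = Real.exp (-(π * ((q : ℝ) ^ 2 / (2 * s ^ 2))) * (k : ℝ) ^ 2) *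
      Real.exp (-(π * (1 / (2 * s ^ 2))) * ((2 * a + (q : ℤ) * k : ℤ) : ℝ) ^ 2) := rfl

lemma Fq_nonneg (q : ℕ) (s : ℝ) (p : ℤ × ℤ) : 0 ≤ Fq q s p :=
  mul_nonneg (Real.exp_pos _).le (Real.exp_pos _).le

lemma Fq_inner_summable (q : ℕ) {s : ℝ} (hs : 0 < s) (k : ℤ) :
    Summable fun a : ℤ => Fq q s (k, a) := by
  have hu : (0:ℝ) < 1 / (2 * s ^ 2) := by positivity
  have h := ((inner_sum_le hu ((q : ℤ) * k)).1).mul_left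
    (Real.exp (-(π * ((q : ℝ) ^ 2 / (2 * s ^ 2))) * (k : ℝ) ^ 2))
  exact h.congr fun a => (Fq_eq q s k a).symm

lemma Fq_inner_le (q : ℕ) {s : ℝ} (hs : 0 < s) (k : ℤ) :
    ∑' a : ℤ, Fq q s (k, a) ≤
      Real.exp (-(π * ((q : ℝ) ^ 2 / (2 * s ^ 2))) * (k : ℝ) ^ 2) * S (4 * (1 / (2 * s ^ 2))) := by
  have hu : (0:ℝ) < 1 / (2 * s ^ 2) := by positivity
  have h1 : ∑' a : ℤ, Fq q s (k, a) =
      Real.exp (-(π * ((q : ℝ) ^ 2 / (2 * s ^ 2))) * (k : ℝ) ^ 2) *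
        ∑' a : ℤ, Real.exp (-(π * (1 / (2 * s ^ 2))) * ((2 * a + (q : ℤ) * k : ℤ) : ℝ) ^ 2) := by
    simp_rw [Fq_eq]
    rw [tsum_mul_left]
  rw [h1]
  exact mul_le_mul_of_nonneg_left (inner_sum_le hu ((q : ℤ) * k)).2 (Real.exp_pos _).le

lemma Fq_summable (q : ℕ) (hq : 0 < q) {s : ℝ} (hs : 0 < s) : Summable (Fq q s) := by
  have hq0 : (0:ℝ) < (q:ℝ) := by exact_mod_cast hq
  refine (summable_prod_of_nonneg (fun p => Fq_nonneg q s p)).2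
    ⟨Fq_inner_summable q hs, ?_⟩
  apply Summable.of_nonneg_of_le (fun k => tsum_nonneg fun a => Fq_nonneg q s _)
    (Fq_inner_le q hs)
  apply Summable.mul_right
  apply summable_S
  positivity

lemma Fq_bound (q : ℕ) {s : ℝ} (hq : 0 < q) (hs : 0 < s) :
    ∑' p : ℤ × ℤ, Fq q s p ≤
      S ((q : ℝ) ^ 2 / (2 * s ^ 2)) * S (4 * (1 / (2 * s ^ 2))) := by
  have hq0 : (0:ℝ) < (q:ℝ) := by exact_mod_cast hq
  have hQ : (0:ℝ) < (q : ℝ) ^ 2 / (2 * s ^ 2) := by positivity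
  rw [Summable.tsum_prod' (Fq_summable q hq hs) (Fq_inner_summable q hs)]
  calc ∑' k : ℤ, ∑' a : ℤ, Fq q s (k, a)
      ≤ ∑' k : ℤ, Real.exp (-(π * ((q : ℝ) ^ 2 / (2 * s ^ 2))) * (k : ℝ) ^ 2) *
          S (4 * (1 / (2 * s ^ 2))) :=
        Summable.tsum_le_tsum (Fq_inner_le q hs) ?_ ((summable_S hQ).mul_right _)
    _ = S ((q : ℝ) ^ 2 / (2 * s ^ 2)) * S (4 * (1 / (2 * s ^ 2))) := by
        rw [tsum_mul_right]; rfl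
  apply Summable.of_nonneg_of_le (fun k => tsum_nonneg fun a => Fq_nonneg q s _)
    (Fq_inner_le q hs)
  exact (summable_S hQ).mul_right _

lemma fsLq_eq (q : ℕ) (hq : 0 < q) {s : ℝ} (hs : 0 < s) :
    fsLq gauss s q = ∑' p : ℤ × ℤ, Fq q s p := by
  rw [fsLq,
    ← (latEquiv q hq).tsum_eq
      (fun v : LqSet q => gauss ((v : ℝ × ℝ).1 / s) * gauss ((v : ℝ × ℝ).2 / s))]
  apply tsum_congr
  rintro ⟨k, a⟩
  show gauss ((a : ℝ) / s) * gauss (((a + (q : ℤ) * k : ℤ) : ℝ) / s) = Fq q s (k, a)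
  rw [Fq_eq]
  simp only [gauss]
  rw [← Real.exp_add, ← Real.exp_add]
  congr 1
  push_cast
  field_simp
  ring

end GaussProofAux

set_option maxHeartbeats 1000000 in
open Real GaussProofAux in
/-- Gaussian bound on `f_s(L_q)`: for `r₀ < s < q/r₀`,
`1/f_s(L_q) > (√2/s)·E_q(s)²`. -/
theorem gaussian_bound_Lq (s : ℝ) (q : ℕ) (hq : 0 < q)
    (hs₁ : r₀ < s) (hs₂ : s < q / r₀) :
    1 / fsLq gauss s q > Real.sqrt 2 / s * Egq q s ^ 2 := by
  have hr₀ : 0 < r₀ := r0_pos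
  have hs0 : 0 < s := lt_trans hr₀ hs₁
  have hq0 : (0 : ℝ) < q := by exact_mod_cast hq
  have hu : (0:ℝ) < 1 / (2 * s ^ 2) := by positivity
  -- Poisson summation on the inner factor
  have h4u : (4 : ℝ) * (1 / (2 * s ^ 2)) = 2 / s ^ 2 := by field_simp; ring
  have hs2 : Real.sqrt (2 / s ^ 2) = Real.sqrt 2 / s := by
    rw [show (2:ℝ) / s ^ 2 = 2 / s ^ 2 from rfl, Real.sqrt_div (by norm_num : (0:ℝ) ≤ 2),
      Real.sqrt_sq hs0.le]
  have hS4u : S (4 * (1 / (2 * s ^ 2))) = s / Real.sqrt 2 * S (s ^ 2 / 2) := by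
    rw [h4u, S_poisson (by positivity)]
    have h2 : (1 : ℝ) / (2 / s ^ 2) = s ^ 2 / 2 := by field_simp
    rw [h2, hs2, one_div_div]
  have hQr : (q : ℝ) ^ 2 / (2 * s ^ 2) = ((q : ℝ) / s) ^ 2 / 2 := by
    field_simp
  -- upper bounds for the theta factors
  have hr0eq : r₀ = Real.sqrt (Real.log 4 / Real.pi) := rfl
  have hr1 : Real.sqrt (Real.log 4 / Real.pi) < (q : ℝ) / s := by
    rw [← hr0eq, lt_div_iff₀ hs0]
    have := (lt_div_iff₀ hr₀).mp hs₂
    nlinarith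
  have hrs : Real.sqrt (Real.log 4 / Real.pi) < s := by rw [← hr0eq]; exact hs₁
  have hA := S_lt_bound hr1
  have hB := S_lt_bound hrs
  have hE1 : 0 < Eg ((q : ℝ) / s) := by
    have := x_lt_half hr1
    rw [Eg]; linarith
  have hE2 : 0 < Eg s := by
    have := x_lt_half hrs
    rw [Eg]; linarith
  have hE1' : S (((q : ℝ) / s) ^ 2 / 2) < 1 / Eg ((q : ℝ) / s) := by rw [Eg]; exact hA
  have hE2' : S (s ^ 2 / 2) < 1 / Eg s := by rw [Eg]; exact hB
  have hsqrt2 : (0 : ℝ) < Real.sqrt 2 := by positivity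
  -- combine
  have hf_lt : fsLq gauss s q < 1 / Eg ((q : ℝ) / s) * (s / Real.sqrt 2 * (1 / Eg s)) := by
    rw [fsLq_eq q hq hs0]
    calc ∑' p : ℤ × ℤ, Fq q s p
        ≤ S ((q : ℝ) ^ 2 / (2 * s ^ 2)) * S (4 * (1 / (2 * s ^ 2))) := Fq_bound q hq hs0
      _ = S (((q : ℝ) / s) ^ 2 / 2) * (s / Real.sqrt 2 * S (s ^ 2 / 2)) := by
          rw [hQr, hS4u]
      _ < 1 / Eg ((q : ℝ) / s) * (s / Real.sqrt 2 * (1 / Eg s)) := by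
          exact mul_lt_mul'' hE1' (mul_lt_mul_of_pos_left hE2' (by positivity))
            (S_pos (by positivity)).le
            (mul_nonneg (by positivity) (S_pos (by positivity)).le)
  have hf_pos : 0 < fsLq gauss s q := by
    rw [fsLq_eq q hq hs0]
    exact Summable.tsum_pos (Fq_summable q hq hs0) (Fq_nonneg q s) (0, 0)
      (mul_pos (Real.exp_pos _) (Real.exp_pos _))
  have hEgq : Egq q s ^ 2 = Eg ((q : ℝ) / s) * Eg s := by
    rw [Egq]
    exact Real.sq_sqrt (mul_nonneg hE1.le hE2.le)
  rw [gt_iff_lt, hEgq, lt_div_iff₀ hf_pos]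
  have hlhs : 0 < Real.sqrt 2 / s * (Eg ((q : ℝ) / s) * Eg s) :=
    mul_pos (by positivity) (mul_pos hE1 hE2)
  calc Real.sqrt 2 / s * (Eg ((q : ℝ) / s) * Eg s) * fsLq gauss s q
      < Real.sqrt 2 / s * (Eg ((q : ℝ) / s) * Eg s) *
          (1 / Eg ((q : ℝ) / s) * (s / Real.sqrt 2 * (1 / Eg s))) :=
        mul_lt_mul_of_pos_left hf_lt hlhs
    _ = 1 := by
        field_simp

end
end

section
/- Gaussian tail bound for lattices (Banaszczyk-type): Let f(x) = exp(−π‖x‖₂²) be the Gaussian on ℝ^n, let L ⊂ ℝ^n be a full-rank lattice, u ∈ ℝ^n a unit vector, and s, t > 0. Define T_{u,t} := {x ∈ ℝ^n : |⟨x, u⟩| ≥ t}. Then f_s(L ∩ T_{u,t}) < 2·exp(−πt²/s²)·f_s(L). -/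
noncomputable section
open RealInnerProductSpace
open scoped ENNReal

/-- The full-rank lattice in ℝ^n generated by the basis `B`. -/
def latt (n : ℕ) (B : Module.Basis (Fin n) ℝ (EuclideanSpace ℝ (Fin n))) :
    Set (EuclideanSpace ℝ (Fin n)) :=
  {x | ∃ z : Fin n → ℤ, x = ∑ i, (z i : ℝ) • B i}

/-- `f_s(X) = Σ_{x ∈ X} exp(−π‖x‖²/s²)`: the scaled Gaussian mass of a set `X ⊆ ℝ^n`. -/
def gaussMass (n : ℕ) (s : ℝ) (X : Set (EuclideanSpace ℝ (Fin n))) : ℝ :=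
  ∑' x : X, Real.exp (-(Real.pi * ‖(x : EuclideanSpace ℝ (Fin n))‖ ^ 2 / s ^ 2))

namespace GTB

variable {n : ℕ}

def qq (β : ℝ) (v : EuclideanSpace ℝ (Fin n)) : ℝ≥0∞ :=
  ENNReal.ofReal (Real.exp (-(β * ‖v‖^2)))

lemma qq_ne_top (β : ℝ) (v : EuclideanSpace ℝ (Fin n)) : qq β v ≠ ∞ := ENNReal.ofReal_ne_top

lemma qq_pos (β : ℝ) (v : EuclideanSpace ℝ (Fin n)) : 0 < qq β v :=
  ENNReal.ofReal_pos.2 (Real.exp_pos _)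

lemma qq_toReal (β : ℝ) (v : EuclideanSpace ℝ (Fin n)) :
    (qq β v).toReal = Real.exp (-(β * ‖v‖^2)) :=
  ENNReal.toReal_ofReal (Real.exp_nonneg _)

/-- parallelogram identity for the Gaussian weight -/
lemma qq_mul_qq (β : ℝ) (a b : EuclideanSpace ℝ (Fin n)) :
    qq β a * qq β b = qq (β/2) (a+b) * qq (β/2) (a-b) := by
  unfold qq
  rw [← ENNReal.ofReal_mul (Real.exp_nonneg _), ← ENNReal.ofReal_mul (Real.exp_nonneg _),
    ← Real.exp_add, ← Real.exp_add]
  rw [ENNReal.ofReal_eq_ofReal_iff (Real.exp_nonneg _) (Real.exp_nonneg _), Real.exp_eq_exp]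
  have h1 := norm_add_sq_real a b
  have h2 := norm_sub_sq_real a b
  linear_combination (β/2)*h1 + (β/2)*h2

variable (B : Module.Basis (Fin n) ℝ (EuclideanSpace ℝ (Fin n)))

def Φ (z : Fin n → ℤ) : EuclideanSpace ℝ (Fin n) := ∑ i, (z i : ℝ) • B i

lemma Φ_eq (z : Fin n → ℤ) : Φ B z = B.equivFun.symm (fun i => (z i : ℝ)) := by
  rw [Module.Basis.equivFun_symm_apply]; rfl

lemma Φ_add (z w : Fin n → ℤ) : Φ B (z + w) = Φ B z + Φ B w := by
  simp only [Φ, ← Finset.sum_add_distrib]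
  congr 1; funext i
  simp only [Pi.add_apply]
  push_cast
  rw [add_smul]

lemma Φ_zero : Φ B 0 = 0 := by simp [Φ]

lemma Φ_sub (z w : Fin n → ℤ) : Φ B (z - w) = Φ B z - Φ B w := by
  have := Φ_add B (z - w) w
  simp at this
  rw [this]; abel

lemma Φ_inj : Function.Injective (Φ B) := by
  intro z w h
  rw [Φ_eq, Φ_eq] at h
  have h2 := B.equivFun.symm.injective h
  funext i
  have := congrFun h2 i
  exact_mod_cast this

def FF (β : ℝ) (c : EuclideanSpace ℝ (Fin n)) : ℝ≥0∞ :=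
  ∑' z : Fin n → ℤ, qq β (Φ B z + c)

lemma FF_periodic (β : ℝ) (c : EuclideanSpace ℝ (Fin n)) (z₀ : Fin n → ℤ) :
    FF B β (Φ B z₀ + c) = FF B β c := by
  unfold FF
  have h := Equiv.tsum_eq (Equiv.addRight z₀) (fun z => qq β (Φ B z + c))
  simp only [Equiv.coe_addRight] at h
  rw [← h]
  exact tsum_congr fun z => congrArg (qq β) (by rw [Φ_add]; abel)

lemma one_le_FF (β : ℝ) : 1 ≤ FF B β 0 := by
  have h : qq (n := n) β (Φ B 0 + 0) = 1 := by
    simp [qq, Φ_zero]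
  calc (1:ℝ≥0∞) = qq β (Φ B 0 + 0) := h.symm
    _ ≤ _ := ENNReal.le_tsum (f := fun z => qq β (Φ B z + 0)) 0


lemma int_gauss_summable {γ : ℝ} (hγ : 0 < γ) :
    Summable (fun k : ℤ => Real.exp (-(γ * (k:ℝ)^2))) := by
  have geo : Summable (fun m : ℕ => (Real.exp (-γ))^m) :=
    summable_geometric_of_lt_one (le_of_lt (Real.exp_pos _))
      (by rwa [Real.exp_lt_one_iff, neg_lt_zero])
  have key : ∀ m : ℕ, Real.exp (-(γ * (m:ℝ)^2)) ≤ (Real.exp (-γ))^m := by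
    intro m
    rw [← Real.exp_nat_mul]
    apply Real.exp_le_exp.2
    have hm : (m:ℝ) ≤ (m:ℝ)^2 := by
      have := Nat.le_self_pow (two_ne_zero) m
      exact_mod_cast this
    nlinarith
  have hnat : Summable (fun m : ℕ => Real.exp (-(γ * (m:ℝ)^2))) :=
    Summable.of_nonneg_of_le (fun _ => Real.exp_nonneg _) key geo
  apply Summable.of_nat_of_neg
  · exact_mod_cast hnat
  · have : (fun m : ℕ => Real.exp (-(γ * ((-(m:ℤ) : ℤ):ℝ)^2)))
        = fun m : ℕ => Real.exp (-(γ * (m:ℝ)^2)) := by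
      funext m; push_cast; ring_nf
    rw [this]; exact hnat

lemma int_gauss_lt_top {γ : ℝ} (hγ : 0 < γ) :
    ∑' k : ℤ, ENNReal.ofReal (Real.exp (-(γ * (k:ℝ)^2))) < ∞ := by
  rw [← ENNReal.ofReal_tsum_of_nonneg (fun _ => Real.exp_nonneg _) (int_gauss_summable hγ)]
  exact ENNReal.ofReal_lt_top

lemma pi_gauss_lt_top : ∀ (m : ℕ) {γ : ℝ}, 0 < γ →
    ∑' z : Fin m → ℤ, ENNReal.ofReal (Real.exp (-(γ * ∑ i, ((z i : ℝ))^2))) < ∞ := by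
  intro m
  induction m with
  | zero =>
    intro γ hγ
    rw [tsum_eq_single (0 : Fin 0 → ℤ) (fun b hb => absurd (Subsingleton.elim b 0) hb)]
    simp
  | succ m ih =>
    intro γ hγ
    rw [← Equiv.tsum_eq (Fin.consEquiv (fun _ : Fin (m+1) => ℤ))]
    have hterm : ∀ p : ℤ × (Fin m → ℤ),
        ENNReal.ofReal (Real.exp (-(γ * ∑ i, (((Fin.consEquiv (fun _ : Fin (m+1) => ℤ)) p i : ℝ))^2)))
          = ENNReal.ofReal (Real.exp (-(γ * (p.1:ℝ)^2)))
            * ENNReal.ofReal (Real.exp (-(γ * ∑ i, ((p.2 i : ℝ))^2))) := by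
      rintro ⟨k, w⟩
      rw [← ENNReal.ofReal_mul (Real.exp_nonneg _), ← Real.exp_add]
      congr 2
      simp only [Fin.consEquiv_apply]
      rw [Fin.sum_univ_succ]
      simp [Fin.cons_zero, Fin.cons_succ]
      ring
    calc ∑' p : ℤ × (Fin m → ℤ), ENNReal.ofReal
            (Real.exp (-(γ * ∑ i, (((Fin.consEquiv (fun _ : Fin (m+1) => ℤ)) p i : ℝ))^2)))
        = ∑' p : ℤ × (Fin m → ℤ), ENNReal.ofReal (Real.exp (-(γ * (p.1:ℝ)^2)))
            * ENNReal.ofReal (Real.exp (-(γ * ∑ i, ((p.2 i : ℝ))^2))) := tsum_congr hterm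
      _ = (∑' k : ℤ, ENNReal.ofReal (Real.exp (-(γ * (k:ℝ)^2))))
            * (∑' z : Fin m → ℤ, ENNReal.ofReal (Real.exp (-(γ * ∑ i, ((z i : ℝ))^2)))) := by
          rw [ENNReal.tsum_prod']
          simp_rw [ENNReal.tsum_mul_left]
          rw [ENNReal.tsum_mul_right]
      _ < ∞ := ENNReal.mul_lt_top (int_gauss_lt_top hγ) (ih hγ)

lemma FF_zero_lt_top {β : ℝ} (hβ : 0 < β) : FF B β 0 < ∞ := by
  classical
  set ψ : EuclideanSpace ℝ (Fin n) →L[ℝ] (Fin n → ℝ) :=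
    LinearMap.toContinuousLinearMap (B.equivFun : _ ≃ₗ[ℝ] _).toLinearMap with hψ
  set C : ℝ := ‖ψ‖ with hC
  have hCnn : 0 ≤ C := norm_nonneg _
  have hcoord : ∀ (z : Fin n → ℤ) (i : Fin n), |(z i : ℝ)| ≤ C * ‖Φ B z‖ := by
    intro z i
    have h1 : ψ (Φ B z) = fun i => (z i : ℝ) := by
      rw [Φ_eq, hψ]
      exact B.equivFun.apply_symm_apply _
    have h2 : ‖ψ (Φ B z)‖ ≤ C * ‖Φ B z‖ := ψ.le_opNorm _
    have h3 : |(z i : ℝ)| ≤ ‖ψ (Φ B z)‖ := by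
      rw [h1]
      exact norm_le_pi_norm (fun i => ((z i : ℝ))) i
    linarith
  set γ : ℝ := β / (n * C^2 + 1) with hγdef
  have hden : (0:ℝ) < n * C^2 + 1 := by positivity
  have hγ : 0 < γ := div_pos hβ hden
  have hsum : ∀ z : Fin n → ℤ, ∑ i, ((z i : ℝ))^2 ≤ (n * C^2 + 1) * ‖Φ B z‖^2 := by
    intro z
    have : ∀ i ∈ Finset.univ, ((z i : ℝ))^2 ≤ C^2 * ‖Φ B z‖^2 := by
      intro i _
      have := hcoord z i
      nlinarith [abs_nonneg ((z i : ℝ)), sq_abs ((z i : ℝ)), norm_nonneg (Φ B z)]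
    calc ∑ i, ((z i : ℝ))^2 ≤ ∑ _i : Fin n, C^2 * ‖Φ B z‖^2 := Finset.sum_le_sum this
      _ = n * (C^2 * ‖Φ B z‖^2) := by rw [Finset.sum_const]; simp [mul_assoc]
      _ ≤ (n * C^2 + 1) * ‖Φ B z‖^2 := by nlinarith [norm_nonneg (Φ B z), sq_nonneg (‖Φ B z‖)]
  have hpt : ∀ z : Fin n → ℤ, qq β (Φ B z + 0)
      ≤ ENNReal.ofReal (Real.exp (-(γ * ∑ i, ((z i : ℝ))^2))) := by
    intro z
    rw [add_zero]
    apply ENNReal.ofReal_le_ofReal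
    apply Real.exp_le_exp.2
    rw [neg_le_neg_iff]
    have h1 : γ * (∑ i, ((z i : ℝ))^2) ≤ γ * ((n * C^2 + 1) * ‖Φ B z‖^2) :=
      mul_le_mul_of_nonneg_left (hsum z) hγ.le
    have h2 : γ * ((n * C^2 + 1) * ‖Φ B z‖^2) = β * ‖Φ B z‖^2 := by
      rw [hγdef]
      field_simp
    linarith
  calc FF B β 0 ≤ _ := ENNReal.tsum_le_tsum hpt
    _ < ∞ := pi_gauss_lt_top n hγ

lemma FF_le_shift {β : ℝ} (hβ : 0 < β) (c : EuclideanSpace ℝ (Fin n)) :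
    FF B β c ≤ ENNReal.ofReal (Real.exp (β * ‖c‖^2)) * FF B (β/2) 0 := by
  unfold FF
  rw [← ENNReal.tsum_mul_left]
  apply ENNReal.tsum_le_tsum
  intro z
  rw [add_zero, qq, qq, ← ENNReal.ofReal_mul (Real.exp_nonneg _), ← Real.exp_add]
  apply ENNReal.ofReal_le_ofReal
  apply Real.exp_le_exp.2
  have h : ‖Φ B z‖ ≤ ‖Φ B z + c‖ + ‖c‖ := by
    have := norm_add_le (Φ B z + c) (-c)
    simpa using this
  have key : ‖Φ B z‖^2 ≤ 2*‖Φ B z + c‖^2 + 2*‖c‖^2 := by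
    nlinarith [sq_nonneg (‖Φ B z + c‖ - ‖c‖), norm_nonneg (Φ B z), h]
  nlinarith [mul_le_mul_of_nonneg_left key hβ.le]

lemma FF_lt_top {β : ℝ} (hβ : 0 < β) (c : EuclideanSpace ℝ (Fin n)) : FF B β c < ∞ :=
  lt_of_le_of_lt (FF_le_shift B hβ c)
    (ENNReal.mul_lt_top ENNReal.ofReal_lt_top (FF_zero_lt_top B (by linarith)))


def bz (ε : Bool) : ℤ := bif ε then 1 else 0

def e1 : Bool × ℤ × ℤ ≃ ℤ × ℤ where
  toFun p := (bz p.1 + p.2.1 + p.2.2, p.2.1 - p.2.2)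
  invFun q := (decide ((q.1 - q.2) % 2 = 1),
    ((q.1 + q.2) - (q.1 - q.2) % 2) / 2, ((q.1 - q.2) - (q.1 - q.2) % 2) / 2)
  left_inv := by
    rintro ⟨ε, a, b⟩
    rcases ε <;>
      simp only [bz, cond_false, cond_true, Prod.mk.injEq, decide_eq_false_iff_not,
        decide_eq_true_eq]
    · exact ⟨decide_eq_false (by omega), by omega, by omega⟩
    · exact ⟨decide_eq_true (by omega), by omega, by omega⟩
  right_inv := by
    rintro ⟨x, y⟩
    rcases Int.emod_two_eq_zero_or_one (x - y) with h | h <;>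
      simp only [h, bz, Prod.mk.injEq, decide_eq_true_eq] <;> norm_num <;> constructor <;> omega

def χ (n : ℕ) : ((Fin n → Bool) × (Fin n → ℤ) × (Fin n → ℤ)) ≃ ((Fin n → ℤ) × (Fin n → ℤ)) :=
  ((Equiv.refl _).prodCongr (Equiv.arrowProdEquivProdArrow (Fin n) (fun _ => ℤ) (fun _ => ℤ)).symm).trans
  (((Equiv.arrowProdEquivProdArrow (Fin n) (fun _ => Bool) (fun _ => ℤ × ℤ)).symm).trans
  ((Equiv.piCongrRight (fun _ => e1)).trans
  (Equiv.arrowProdEquivProdArrow (Fin n) (fun _ => ℤ) (fun _ => ℤ))))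

lemma χ_apply (n : ℕ) (ε : Fin n → Bool) (a b : Fin n → ℤ) :
    χ n (ε, a, b) = ((fun i => bz (ε i)) + a + b, a - b) := rfl

def DD (β : ℝ) (w z : EuclideanSpace ℝ (Fin n)) : ℝ≥0∞ :=
  ∑' p : (Fin n → ℤ) × (Fin n → ℤ),
    qq (β/2) (Φ B p.1 + Φ B p.2 + w) * qq (β/2) (Φ B p.1 - Φ B p.2 + z)

lemma FF_mul_FF (β : ℝ) (u v : EuclideanSpace ℝ (Fin n)) :
    FF B β u * FF B β v = DD B β (u+v) (u-v) := by
  unfold FF DD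
  rw [ENNReal.tsum_prod']
  rw [← ENNReal.tsum_mul_right]
  refine tsum_congr fun x => ?_
  rw [← ENNReal.tsum_mul_left]
  refine tsum_congr fun y => ?_
  rw [qq_mul_qq]
  congr 1 <;> exact congrArg _ (by abel)

set_option maxHeartbeats 1000000 in
lemma DD_diag (β : ℝ) (w : EuclideanSpace ℝ (Fin n)) :
    DD B β w w = FF B β w * FF B β 0 := by
  unfold FF DD
  rw [ENNReal.tsum_prod']
  rw [← ENNReal.tsum_mul_right]
  refine tsum_congr fun x => ?_
  rw [← ENNReal.tsum_mul_left]
  refine tsum_congr fun y => ?_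
  rw [qq_mul_qq β (Φ B x + w) (Φ B y + 0)]
  congr 1 <;> exact congrArg _ (by abel)

def NN (β : ℝ) (ε : Fin n → Bool) (w : EuclideanSpace ℝ (Fin n)) : ℝ≥0∞ :=
  ∑' a : Fin n → ℤ, qq (β/2) (Φ B ((fun i => bz (ε i)) + a + a) + w)

set_option maxHeartbeats 1000000 in
lemma DD_sum (β : ℝ) (w z : EuclideanSpace ℝ (Fin n)) :
    DD B β w z = ∑ ε : Fin n → Bool, NN B β ε w * NN B β ε z := by
  unfold DD
  rw [← Equiv.tsum_eq (χ n)
    (fun p => qq (β/2) (Φ B p.1 + Φ B p.2 + w) * qq (β/2) (Φ B p.1 - Φ B p.2 + z))]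
  rw [ENNReal.tsum_prod']
  rw [← tsum_fintype (L := SummationFilter.unconditional _)]
  refine tsum_congr fun ε => ?_
  rw [ENNReal.tsum_prod']
  unfold NN
  rw [← ENNReal.tsum_mul_right]
  refine tsum_congr fun a => ?_
  rw [← ENNReal.tsum_mul_left]
  refine tsum_congr fun b => ?_
  rw [χ_apply]
  congr 1
  · congr 1
    rw [← Φ_add]
    exact congrArg (fun t => Φ B t + w) (by funext i; simp only [Pi.add_apply, Pi.sub_apply]; ring)
  · congr 1
    rw [← Φ_sub]
    exact congrArg (fun t => Φ B t + z) (by funext i; simp only [Pi.add_apply, Pi.sub_apply]; ring)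

lemma NN_le (β : ℝ) (ε : Fin n → Bool) (w : EuclideanSpace ℝ (Fin n)) :
    NN B β ε w ≤ FF B (β/2) w := by
  unfold NN FF
  have hinj : Function.Injective (fun a : Fin n → ℤ => (fun i => bz (ε i)) + a + a) := by
    intro a b h
    funext i
    have := congrFun h i
    simp only [Pi.add_apply] at this
    omega
  exact ENNReal.tsum_comp_le_tsum_of_injective hinj (fun y => qq (β/2) (Φ B y + w))

lemma NN_ne_top {β : ℝ} (hβ : 0 < β) (ε : Fin n → Bool) (w : EuclideanSpace ℝ (Fin n)) :
    NN B β ε w ≠ ∞ :=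
  ((NN_le B β ε w).trans_lt (FF_lt_top B (by linarith) w)).ne

lemma DD_sq_le {β : ℝ} (hβ : 0 < β) (w z : EuclideanSpace ℝ (Fin n)) :
    (DD B β w z)^2 ≤ DD B β w w * DD B β z z := by
  classical
  set a : (Fin n → Bool) → ℝ := fun ε => (NN B β ε w).toReal with ha
  set b : (Fin n → Bool) → ℝ := fun ε => (NN B β ε z).toReal with hb
  have hae : ∀ ε, NN B β ε w = ENNReal.ofReal (a ε) :=
    fun ε => (ENNReal.ofReal_toReal (NN_ne_top B hβ ε w)).symm
  have hbe : ∀ ε, NN B β ε z = ENNReal.ofReal (b ε) :=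
    fun ε => (ENNReal.ofReal_toReal (NN_ne_top B hβ ε z)).symm
  have hanon : ∀ ε, 0 ≤ a ε := fun ε => ENNReal.toReal_nonneg
  have hbnon : ∀ ε, 0 ≤ b ε := fun ε => ENNReal.toReal_nonneg
  have h1 : DD B β w z = ENNReal.ofReal (∑ ε : Fin n → Bool, a ε * b ε) := by
    rw [DD_sum, ENNReal.ofReal_sum_of_nonneg
      (fun ε _ => mul_nonneg (hanon ε) (hbnon ε))]
    exact Finset.sum_congr rfl fun ε _ => by
      rw [hae, hbe, ENNReal.ofReal_mul (hanon ε)]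
  have h2 : DD B β w w = ENNReal.ofReal (∑ ε : Fin n → Bool, a ε ^ 2) := by
    rw [DD_sum, ENNReal.ofReal_sum_of_nonneg (fun ε _ => sq_nonneg _)]
    exact Finset.sum_congr rfl fun ε _ => by
      rw [hae, sq, ENNReal.ofReal_mul (hanon ε)]
  have h3 : DD B β z z = ENNReal.ofReal (∑ ε : Fin n → Bool, b ε ^ 2) := by
    rw [DD_sum, ENNReal.ofReal_sum_of_nonneg (fun ε _ => sq_nonneg _)]
    exact Finset.sum_congr rfl fun ε _ => by
      rw [hbe, sq, ENNReal.ofReal_mul (hbnon ε)]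
  rw [h1, h2, h3, ← ENNReal.ofReal_pow (Finset.sum_nonneg fun ε _ => mul_nonneg (hanon ε) (hbnon ε)),
    ← ENNReal.ofReal_mul (Finset.sum_nonneg fun ε _ => sq_nonneg _)]
  exact ENNReal.ofReal_le_ofReal (Finset.sum_mul_sq_le_sq_mul_sq Finset.univ a b)

lemma FF_pow_four {β : ℝ} (hβ : 0 < β) (u : EuclideanSpace ℝ (Fin n)) :
    FF B β u ^ 4 ≤ FF B β 0 ^ 3 * FF B β (u+u) := by
  have h1 : FF B β u * FF B β u = DD B β (u+u) 0 := by
    have := FF_mul_FF B β u u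
    rwa [sub_self] at this
  have h2 : FF B β u ^ 4 = (DD B β (u+u) 0)^2 := by
    rw [← h1]; ring
  rw [h2]
  calc (DD B β (u+u) 0)^2 ≤ DD B β (u+u) (u+u) * DD B β 0 0 := DD_sq_le B hβ _ _
    _ = (FF B β (u+u) * FF B β 0) * (FF B β 0 * FF B β 0) := by rw [DD_diag, DD_diag]
    _ = FF B β 0 ^ 3 * FF B β (u+u) := by ring

lemma sq_iSup_le {γ : Type*} (g : γ → ℝ≥0∞) : (⨆ c, g c)^2 ≤ ⨆ c, (g c)^2 := by
  rw [sq, ENNReal.iSup_mul]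
  refine iSup_le fun c => ?_
  rw [ENNReal.mul_iSup]
  refine iSup_le fun d => ?_
  rcases le_total (g c) (g d) with h | h
  · calc g c * g d ≤ g d * g d := mul_le_mul_left h _
      _ = g d ^ 2 := (sq _).symm
      _ ≤ _ := le_iSup (fun e => g e ^ 2) d
  · calc g c * g d ≤ g c * g c := mul_le_mul_right h _
      _ = g c ^ 2 := (sq _).symm
      _ ≤ _ := le_iSup (fun e => g e ^ 2) c

/-- The key shift lemma: the Gaussian mass of a shifted lattice is at most that of the lattice. -/
lemma FF_shift_le {β : ℝ} (hβ : 0 < β) (c : EuclideanSpace ℝ (Fin n)) :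
    FF B β c ≤ FF B β 0 := by
  set M : ℝ≥0∞ := ⨆ c : EuclideanSpace ℝ (Fin n), FF B β c with hM
  have hub : ∀ c, FF B β c ≤
      ENNReal.ofReal (Real.exp (β * (∑ i, ‖B i‖)^2)) * FF B (β/2) 0 := by
    intro c
    obtain ⟨z₀, hz₀⟩ : ∃ z₀, Φ B z₀ = (ZSpan.floor B c : EuclideanSpace ℝ (Fin n)) := by
      obtain ⟨cf, hcf⟩ := (Submodule.mem_span_range_iff_exists_fun ℤ).1 (ZSpan.floor B c).2
      refine ⟨cf, ?_⟩
      rw [← hcf]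
      exact Finset.sum_congr rfl fun i _ => Int.cast_smul_eq_zsmul ℝ (cf i) (B i)
    have hdec : Φ B z₀ + ZSpan.fract B c = c := by
      rw [hz₀, ZSpan.fract_apply]; abel
    rw [← hdec, FF_periodic]
    refine (FF_le_shift B hβ _).trans ?_
    refine mul_le_mul_left (ENNReal.ofReal_le_ofReal (Real.exp_le_exp.2 ?_)) _
    have hfr := ZSpan.norm_fract_le B c
    have h2 : ‖ZSpan.fract B c‖^2 ≤ (∑ i, ‖B i‖)^2 :=
      pow_le_pow_left₀ (norm_nonneg _) hfr 2
    nlinarith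
  have hKtop : ENNReal.ofReal (Real.exp (β * (∑ i, ‖B i‖)^2)) * FF B (β/2) 0 ≠ ∞ :=
    (ENNReal.mul_lt_top ENNReal.ofReal_lt_top (FF_zero_lt_top B (by linarith))).ne
  have hMtop : M ≠ ∞ := ne_top_of_le_ne_top hKtop (iSup_le hub)
  have hM0 : M ≠ 0 := by
    intro h0
    have h1 : (1:ℝ≥0∞) ≤ M := (one_le_FF B β).trans (le_iSup _ 0)
    rw [h0] at h1
    exact (by norm_num : ¬ ((1:ℝ≥0∞) ≤ 0)) h1
  have h4 : M^4 ≤ FF B β 0 ^ 3 * M := by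
    calc M^4 = (M^2)^2 := by ring
      _ ≤ ((⨆ c, FF B β c ^ 2))^2 := pow_le_pow_left' (sq_iSup_le _) 2
      _ ≤ ⨆ c, (FF B β c ^ 2)^2 := sq_iSup_le _
      _ = ⨆ c, FF B β c ^ 4 := by
          refine iSup_congr fun c => ?_
          ring
      _ ≤ FF B β 0 ^ 3 * M := by
          refine iSup_le fun c => (FF_pow_four B hβ c).trans ?_
          exact mul_le_mul_right (le_iSup _ (c+c)) _
  have h3 : M^3 ≤ FF B β 0 ^ 3 := by
    rw [← ENNReal.mul_le_mul_iff_left hM0 hMtop, ← pow_succ]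
    exact h4
  have hMle : M ≤ FF B β 0 := by
    by_contra hlt
    push_neg at hlt
    exact absurd h3 (not_le.2 (ENNReal.pow_lt_pow_left (by norm_num) hlt))
  exact (le_iSup _ c).trans hMle


lemma tail_pointwise {α t : ℝ} (hα : 0 < α) (ht : 0 < t) {u x : EuclideanSpace ℝ (Fin n)}
    (hu : ‖u‖ = 1) (hx : t ≤ |⟪x, u⟫|) :
    qq α x ≤ ENNReal.ofReal (Real.exp (-(α * t^2))) * (qq α (x - t • u) + qq α (x + t • u)) := by
  unfold qq
  rw [← ENNReal.ofReal_add (Real.exp_nonneg _) (Real.exp_nonneg _),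
    ← ENNReal.ofReal_mul (Real.exp_nonneg _)]
  apply ENNReal.ofReal_le_ofReal
  set p : ℝ := ⟪x, u⟫ with hp
  have htu : ‖t • u‖^2 = t^2 := by
    rw [norm_smul, Real.norm_eq_abs, hu, mul_one, sq_abs]
  have hsub : ‖x - t•u‖^2 = ‖x‖^2 - 2*(t*p) + t^2 := by
    rw [norm_sub_sq_real, real_inner_smul_right, htu]
  have hadd : ‖x + t•u‖^2 = ‖x‖^2 + 2*(t*p) + t^2 := by
    rw [norm_add_sq_real, real_inner_smul_right, htu]
  rw [hsub, hadd]
  have e1 : Real.exp (-(α * (‖x‖^2 - 2*(t*p) + t^2)))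
      = Real.exp (-(α * ‖x‖^2)) * Real.exp (2*α*t*p) * Real.exp (-(α*t^2)) := by
    rw [← Real.exp_add, ← Real.exp_add]
    congr 1
    ring
  have e2 : Real.exp (-(α * (‖x‖^2 + 2*(t*p) + t^2)))
      = Real.exp (-(α * ‖x‖^2)) * Real.exp (-(2*α*t*p)) * Real.exp (-(α*t^2)) := by
    rw [← Real.exp_add, ← Real.exp_add]
    congr 1
    ring
  rw [e1, e2]
  have key : Real.exp (2*α*t^2) ≤ Real.exp (2*α*t*p) + Real.exp (-(2*α*t*p)) := by
    rcases abs_cases p with ⟨habs, hsign⟩ | ⟨habs, hsign⟩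
    · have hpt : t ≤ p := by rw [← habs]; exact hx
      have : Real.exp (2*α*t^2) ≤ Real.exp (2*α*t*p) := by
        apply Real.exp_le_exp.2
        nlinarith [mul_le_mul_of_nonneg_left hpt (by positivity : (0:ℝ) ≤ 2*α*t)]
      linarith [Real.exp_nonneg (-(2*α*t*p))]
    · have hpt : t ≤ -p := by rw [← habs]; exact hx
      have : Real.exp (2*α*t^2) ≤ Real.exp (-(2*α*t*p)) := by
        apply Real.exp_le_exp.2
        nlinarith [mul_le_mul_of_nonneg_left hpt (by positivity : (0:ℝ) ≤ 2*α*t)]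
      linarith [Real.exp_nonneg (2*α*t*p)]
  have hAA : Real.exp (-(α*t^2)) * Real.exp (-(α*t^2)) * Real.exp (2*α*t^2) = 1 := by
    rw [← Real.exp_add, ← Real.exp_add, ← Real.exp_zero]
    congr 1
    ring
  calc Real.exp (-(α * ‖x‖^2))
      = Real.exp (-(α * ‖x‖^2)) *
          (Real.exp (-(α*t^2)) * Real.exp (-(α*t^2)) * Real.exp (2*α*t^2)) := by
        rw [hAA, mul_one]
    _ ≤ Real.exp (-(α * ‖x‖^2)) *
          (Real.exp (-(α*t^2)) * Real.exp (-(α*t^2)) *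
            (Real.exp (2*α*t*p) + Real.exp (-(2*α*t*p)))) := by
        apply mul_le_mul_of_nonneg_left _ (Real.exp_nonneg _)
        apply mul_le_mul_of_nonneg_left key
        positivity
    _ = Real.exp (-(α*t^2)) *
          (Real.exp (-(α * ‖x‖^2)) * Real.exp (2*α*t*p) * Real.exp (-(α*t^2)) +
            Real.exp (-(α * ‖x‖^2)) * Real.exp (-(2*α*t*p)) * Real.exp (-(α*t^2))) := by
        ring

lemma memlatt (z : Fin n → ℤ) : Φ B z ∈ latt n B := ⟨z, rfl⟩

lemma latt_tsum (α : ℝ) (c : EuclideanSpace ℝ (Fin n)) :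
    ∑' x : (latt n B), qq α ((x : EuclideanSpace ℝ (Fin n)) + c) = FF B α c := by
  have hbij : Function.Bijective (fun z : Fin n → ℤ => (⟨Φ B z, memlatt B z⟩ : (latt n B))) := by
    constructor
    · intro z w h
      exact Φ_inj B (congrArg Subtype.val h)
    · rintro ⟨x, z, rfl⟩
      exact ⟨z, rfl⟩
  exact (Equiv.tsum_eq (Equiv.ofBijective _ hbij)
    (fun x : (latt n B) => qq α ((x : EuclideanSpace ℝ (Fin n)) + c))).symm

end GTB

open GTB

/-- Gaussian tail bound for lattices (Banaszczyk-type): for a full-rank lattice `L`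
(generated by basis `B`), a unit vector `u`, and `s, t > 0`, with
`T_{u,t} = {x : |⟨x,u⟩| ≥ t}`, we have
`f_s(L ∩ T_{u,t}) < 2·exp(−πt²/s²)·f_s(L)`. -/
theorem gaussian_tail_bound (n : ℕ) (B : Module.Basis (Fin n) ℝ (EuclideanSpace ℝ (Fin n)))
    (u : EuclideanSpace ℝ (Fin n)) (hu : ‖u‖ = 1) (s t : ℝ) (hs : 0 < s) (ht : 0 < t) :
    gaussMass n s (latt n B ∩ {x | t ≤ |⟪x, u⟫|}) <
      2 * Real.exp (-(Real.pi * t ^ 2 / s ^ 2)) * gaussMass n s (latt n B) := by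
  classical
  set α := Real.pi / s^2 with hαdef
  have hα : 0 < α := div_pos Real.pi_pos (pow_pos hs 2)
  have hmass : ∀ X : Set (EuclideanSpace ℝ (Fin n)),
      gaussMass n s X = (∑' x : X, qq α (x : EuclideanSpace ℝ (Fin n))).toReal := by
    intro X
    rw [ENNReal.tsum_toReal_eq (fun _ => qq_ne_top _ _)]
    unfold gaussMass
    refine tsum_congr fun x => ?_
    rw [qq_toReal]
    congr 1
    rw [hαdef]
    ring
  set T : Set (EuclideanSpace ℝ (Fin n)) := {x | t ≤ |⟪x, u⟫|} with hT
  set C : ℝ≥0∞ := ENNReal.ofReal (Real.exp (-(α * t^2))) with hC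
  set f : EuclideanSpace ℝ (Fin n) → ℝ≥0∞ :=
    fun x => qq α (x - t•u) + qq α (x + t•u) with hf
  -- sum of f over the full lattice
  have hgsum : ∑' x : (latt n B), f ↑x = FF B α (-(t•u)) + FF B α (t•u) := by
    simp only [hf]
    rw [ENNReal.tsum_add]
    congr 1
    · rw [← latt_tsum B α (-(t•u))]
      exact tsum_congr fun x => by rw [sub_eq_add_neg]
    · exact latt_tsum B α (t•u)
  have hGne : (∑' x : (latt n B), f ↑x) ≠ ⊤ := by
    rw [hgsum]
    exact (ENNReal.add_lt_top.2 ⟨FF_lt_top B hα _, FF_lt_top B hα _⟩).ne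
  -- strict comparison of the partial sum with the full sum
  have h0mem : (0 : EuclideanSpace ℝ (Fin n)) ∈ latt n B ∩ Tᶜ := by
    constructor
    · exact ⟨0, by simp⟩
    · simp only [hT, Set.mem_compl_iff, Set.mem_setOf_eq, inner_zero_left, abs_zero, not_le]
      exact ht
  have hdisj : Disjoint (latt n B ∩ T) (latt n B ∩ Tᶜ) :=
    Disjoint.mono Set.inter_subset_right Set.inter_subset_right disjoint_compl_right
  have hunion : (latt n B ∩ T) ∪ (latt n B ∩ Tᶜ) = latt n B := by
    rw [← Set.inter_union_distrib_left, Set.union_compl_self, Set.inter_univ]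
  have hfin : (∑' x : EuclideanSpace ℝ (Fin n), (latt n B ∩ T).indicator f x) ≠ ⊤ := by
    refine ne_top_of_le_ne_top ?_ (ENNReal.tsum_le_tsum
      (Set.indicator_le_indicator_of_subset Set.inter_subset_left (fun _ => zero_le)))
    rw [← tsum_subtype (latt n B) f]
    exact hGne
  have hpos : (∑' x : EuclideanSpace ℝ (Fin n), (latt n B ∩ Tᶜ).indicator f x) ≠ 0 := by
    refine ne_of_gt (lt_of_lt_of_le ?_ (ENNReal.le_tsum 0))
    rw [Set.indicator_of_mem h0mem, hf]
    exact (qq_pos α _).trans_le le_self_add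
  have hind : (latt n B).indicator f
      = fun a => (latt n B ∩ T).indicator f a + (latt n B ∩ Tᶜ).indicator f a := by
    conv_lhs => rw [← hunion]
    exact Set.indicator_union_of_disjoint hdisj f
  have step2 : (∑' x : ↑(latt n B ∩ T), f ↑x) < ∑' x : (latt n B), f ↑x := by
    rw [tsum_subtype, tsum_subtype]
    calc ∑' x : EuclideanSpace ℝ (Fin n), (latt n B ∩ T).indicator f x
        < (∑' x : EuclideanSpace ℝ (Fin n), (latt n B ∩ T).indicator f x)
          + ∑' x : EuclideanSpace ℝ (Fin n), (latt n B ∩ Tᶜ).indicator f x :=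
          ENNReal.lt_add_right hfin hpos
      _ = ∑' x : EuclideanSpace ℝ (Fin n),
            ((latt n B ∩ T).indicator f x + (latt n B ∩ Tᶜ).indicator f x) :=
          ENNReal.tsum_add.symm
      _ = ∑' x : EuclideanSpace ℝ (Fin n), (latt n B).indicator f x :=
          tsum_congr fun x => (congrFun hind x).symm
  have step3 : (∑' x : (latt n B), f ↑x) ≤ 2 * FF B α 0 := by
    rw [hgsum, two_mul]
    exact add_le_add (FF_shift_le B hα _) (FF_shift_le B hα _)
  have step1 : (∑' x : ↑(latt n B ∩ T), qq α (x : EuclideanSpace ℝ (Fin n)))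
      ≤ C * ∑' x : ↑(latt n B ∩ T), f ↑x := by
    rw [← ENNReal.tsum_mul_left]
    refine ENNReal.tsum_le_tsum fun x => ?_
    exact tail_pointwise hα ht hu x.2.2
  have hCne0 : C ≠ 0 := (ENNReal.ofReal_pos.2 (Real.exp_pos _)).ne'
  have hCnetop : C ≠ ⊤ := ENNReal.ofReal_ne_top
  have hFFtop : FF B α 0 ≠ ⊤ := (FF_lt_top B hα 0).ne
  have hmain : (∑' x : ↑(latt n B ∩ T), qq α (x : EuclideanSpace ℝ (Fin n)))
      < C * (2 * FF B α 0) :=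
    step1.trans_lt (lt_of_lt_of_le (ENNReal.mul_lt_mul_right hCne0 hCnetop step2)
      (mul_le_mul_right step3 C))
  have hSLdef : (∑' x : (latt n B), qq α (x : EuclideanSpace ℝ (Fin n))) = FF B α 0 := by
    rw [← latt_tsum B α 0]
    exact tsum_congr fun x => by rw [add_zero]
  have hSTne : (∑' x : ↑(latt n B ∩ T), qq α (x : EuclideanSpace ℝ (Fin n))) ≠ ⊤ :=
    ne_top_of_lt hmain
  have hRne : C * (2 * FF B α 0) ≠ ⊤ :=
    ENNReal.mul_ne_top hCnetop (ENNReal.mul_ne_top (by norm_num) hFFtop)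
  rw [hmass, hmass]
  calc (∑' x : ↑(latt n B ∩ T), qq α (x : EuclideanSpace ℝ (Fin n))).toReal
      < (C * (2 * FF B α 0)).toReal := (ENNReal.toReal_lt_toReal hSTne hRne).2 hmain
    _ = 2 * Real.exp (-(Real.pi * t ^ 2 / s ^ 2))
        * (∑' x : (latt n B), qq α (x : EuclideanSpace ℝ (Fin n))).toReal := by
        rw [hSLdef, ENNReal.toReal_mul, ENNReal.toReal_mul, hC,
          ENNReal.toReal_ofReal (Real.exp_nonneg _), ENNReal.toReal_ofNat]
        have : α * t^2 = Real.pi * t ^ 2 / s ^ 2 := by rw [hαdef]; ring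
        rw [this]
        ring

end
end

section
/- ℓ₂ minimum distance of twisted GRS codes: Let q be prime, let α₁,…,α_n ∈ F_q be distinct and nonzero (so n ≤ q−1), and let 1 ≤ k ≤ n. Then every nonzero codeword c of the code GRS_{q,k}(α,α) = {(α₁u(α₁),…,α_n u(α_n)) : u ∈ F_q[X], deg u < k} satisfies ‖c‖₂² ≥ ((n+1)² − k²)/(12k²) · (n+1), and this quantity is strictly greater than ((1 − R²)/(12R²))·n where R = k/n; here ‖c‖₂ is computed by lifting each coordinate of c to its representative in [−q/2, q/2) ∩ ℤ. -/
noncomputable section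

/-- The lift of `x : ZMod q` to its distinguished integer representative in
`[−q/2, q/2) ∩ ℤ`. -/
def zlift (q : ℕ) (x : ZMod q) : ℤ :=
  if 2 * x.val < q then (x.val : ℤ) else (x.val : ℤ) - q

lemma zlift_cast (q : ℕ) [NeZero q] (x : ZMod q) : ((zlift q x : ℤ) : ZMod q) = x := by
  unfold zlift
  split <;> push_cast <;> simp [ZMod.natCast_zmod_val]

lemma zlift_zero (q : ℕ) [NeZero q] : zlift q 0 = 0 := by
  unfold zlift
  simp [ZMod.val_zero, Nat.pos_of_ne_zero (NeZero.ne q)]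

/-- Per-coordinate layer-cake bound. -/
lemma layer_sum_le_sq (m : ℕ) (a : ℤ) :
    (∑ j ∈ Finset.range m, if (j : ℤ) + 1 ≤ |a| then (2 * (j : ℤ) + 1) else 0) ≤ a ^ 2 := by
  have habs : |a| = (a.natAbs : ℤ) := Int.abs_eq_natAbs a
  have key : ∀ M : ℕ,
      (∑ j ∈ Finset.range M, if (j : ℤ) + 1 ≤ |a| then (2 * (j : ℤ) + 1) else 0)
        = ((min M a.natAbs : ℕ) : ℤ) ^ 2 := by
    intro M
    induction M with
    | zero => simp
    | succ M ih =>
      rw [Finset.sum_range_succ, ih]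
      by_cases h : (M : ℤ) + 1 ≤ |a|
      · have hM : M < a.natAbs := by rw [habs] at h; omega
        rw [if_pos h, min_eq_left hM.le, min_eq_left hM]
        push_cast
        ring
      · have hM : a.natAbs ≤ M := by rw [habs] at h; omega
        rw [if_neg h, min_eq_right hM, min_eq_right (by omega), add_zero]
  rw [key m]
  have h1 : ((min m a.natAbs : ℕ) : ℤ) ≤ |a| := by
    rw [habs]; exact_mod_cast min_le_right _ _
  have h2 : (0 : ℤ) ≤ ((min m a.natAbs : ℕ) : ℤ) := by positivity
  calc ((min m a.natAbs : ℕ) : ℤ) ^ 2 ≤ |a| ^ 2 := by nlinarith [abs_nonneg a]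
    _ = a ^ 2 := sq_abs a

/-- Closed form for the layered sum. -/
lemma sum_closed_form (Nr kr : ℝ) (m : ℕ) :
    (∑ j ∈ Finset.range m, (2 * (j : ℝ) + 1) * (Nr - (2 * (j : ℝ) + 1) * kr))
      = Nr * (m : ℝ) ^ 2 - kr * (m : ℝ) * (4 * (m : ℝ) ^ 2 - 1) / 3 := by
  induction m with
  | zero => simp
  | succ m ih =>
    rw [Finset.sum_range_succ, ih]
    push_cast
    ring

/-- The real minimization inequality. -/
lemma real_min_ineq (Nr kr x : ℝ) (hk : 0 < kr) (hkN : kr ≤ Nr)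
    (h1 : Nr - kr ≤ 2 * kr * x) (h2 : 2 * kr * x ≤ Nr + kr) :
    Nr * (Nr ^ 2 - kr ^ 2) / (12 * kr ^ 2) ≤ Nr * x ^ 2 - kr * x * (4 * x ^ 2 - 1) / 3 := by
  have hx0 : 0 ≤ x := by nlinarith
  have key : 12 * kr ^ 2 * (Nr * x ^ 2 - kr * x * (4 * x ^ 2 - 1) / 3) - Nr * (Nr ^ 2 - kr ^ 2)
      = (2 * kr * x - Nr + kr) * ((Nr + kr) - 2 * kr * x) * (4 * kr * x + Nr) := by
    ring
  have hA : 0 ≤ 2 * kr * x - Nr + kr := by linarith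
  have hB : 0 ≤ (Nr + kr) - 2 * kr * x := by linarith
  have hC : 0 ≤ 4 * kr * x + Nr := by nlinarith
  have hprod : 0 ≤ (2 * kr * x - Nr + kr) * ((Nr + kr) - 2 * kr * x) * (4 * kr * x + Nr) :=
    mul_nonneg (mul_nonneg hA hB) hC
  rw [div_le_iff₀ (by positivity)]
  nlinarith [key, hprod]

/-- ℓ₂ minimum distance of twisted GRS codes: for prime `q`, distinct nonzero
evaluation points `α`, and `1 ≤ k ≤ n`, every nonzero codeword
`c = (α₁u(α₁),…,α_n u(α_n))` with `deg u < k` satisfies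
`‖c‖₂² ≥ ((n+1)² − k²)/(12k²)·(n+1) > ((1 − R²)/(12R²))·n`, `R = k/n`. -/
theorem ell2_min_dist_twisted_GRS (q : ℕ) (hq : Nat.Prime q) (n k : ℕ)
    (hk1 : 1 ≤ k) (hkn : k ≤ n)
    (α : Fin n → ZMod q) (hinj : Function.Injective α) (hα0 : ∀ i, α i ≠ 0)
    (u : Polynomial (ZMod q)) (hu : u.degree < (k : WithBot ℕ))
    (c : Fin n → ZMod q) (hc : ∀ i, c i = α i * Polynomial.eval (α i) u)
    (hc0 : c ≠ 0) :
    (((n : ℝ) + 1) ^ 2 - (k : ℝ) ^ 2) / (12 * (k : ℝ) ^ 2) * ((n : ℝ) + 1) ≤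
        ∑ i, ((zlift q (c i) : ℝ)) ^ 2 ∧
      (1 - ((k : ℝ) / (n : ℝ)) ^ 2) / (12 * ((k : ℝ) / (n : ℝ)) ^ 2) * (n : ℝ) <
        (((n : ℝ) + 1) ^ 2 - (k : ℝ) ^ 2) / (12 * (k : ℝ) ^ 2) * ((n : ℝ) + 1) := by
  haveI : Fact q.Prime := ⟨hq⟩
  haveI : NeZero q := ⟨hq.ne_zero⟩
  classical
  -- u is nonzero
  have hu0 : u ≠ 0 := by
    intro h
    apply hc0
    funext i
    simp [hc i, h]
  have hndeg : u.natDegree < k :=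
    (Polynomial.natDegree_lt_iff_degree_lt hu0).mpr hu
  -- counting lemma for values of c
  have countV : ∀ v : ZMod q, v ≠ 0 →
      (Finset.univ.filter (fun i => c i = v)).card ≤ k := by
    intro v hv
    set p : Polynomial (ZMod q) := Polynomial.X * u - Polynomial.C v with hp
    have hp0 : p ≠ 0 := by
      intro h
      have : p.eval 0 = 0 := by rw [h]; simp
      simp [hp] at this
      exact hv this
    have hpd : p.natDegree ≤ k := by
      refine le_trans (Polynomial.natDegree_sub_le _ _) ?_
      simp only [Polynomial.natDegree_C, max_le_iff]
      constructor
      · refine le_trans (Polynomial.natDegree_mul_le) ?_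
        simp [Polynomial.natDegree_X]
        omega
      · omega
    calc (Finset.univ.filter (fun i => c i = v)).card
        ≤ p.roots.toFinset.card := by
          apply Finset.card_le_card_of_injOn α
          · intro i hi
            simp only [Finset.mem_coe, Finset.mem_filter, Finset.mem_univ, true_and] at hi ⊢
            rw [Multiset.mem_toFinset, Polynomial.mem_roots hp0]
            rw [Polynomial.IsRoot.def, hp]
            simp only [Polynomial.eval_sub, Polynomial.eval_mul, Polynomial.eval_X,
              Polynomial.eval_C]
            rw [← hc i, hi, sub_self]
          · exact fun a _ b _ hab => hinj hab
      _ ≤ Multiset.card p.roots := p.roots.toFinset_card_le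
      _ ≤ p.natDegree := p.card_roots'
      _ ≤ k := hpd
  have count0 : (Finset.univ.filter (fun i => c i = 0)).card ≤ k - 1 := by
    calc (Finset.univ.filter (fun i => c i = 0)).card
        ≤ u.roots.toFinset.card := by
          apply Finset.card_le_card_of_injOn α
          · intro i hi
            simp only [Finset.mem_coe, Finset.mem_filter, Finset.mem_univ, true_and] at hi ⊢
            rw [Multiset.mem_toFinset, Polynomial.mem_roots hu0]
            have := hc i
            rw [hi] at this
            have h2 : Polynomial.eval (α i) u = 0 := by
              rcases mul_eq_zero.mp this.symm with h | h
              · exact absurd h (hα0 i)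
              · exact h
            exact h2
          · exact fun a _ b _ hab => hinj hab
      _ ≤ Multiset.card u.roots := u.roots.toFinset_card_le
      _ ≤ u.natDegree := u.card_roots'
      _ ≤ k - 1 := by omega
  -- counting lemma for integer lifts
  set t : Fin n → ℤ := fun i => zlift q (c i) with ht
  have countZ : ∀ b : ℤ, b ≠ 0 →
      (Finset.univ.filter (fun i => t i = b)).card ≤ k := by
    intro b hb
    by_cases hbq : (b : ZMod q) = 0
    · have : (Finset.univ.filter (fun i => t i = b)) = ∅ := by
        ext i
        simp only [Finset.mem_filter, Finset.mem_univ, true_and, Finset.notMem_empty,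
          iff_false]
        intro h
        have h' : zlift q (c i) = b := h
        have hci : c i = 0 := by
          have := zlift_cast q (c i)
          rw [← this, h', hbq]
        rw [hci, zlift_zero] at h'
        exact hb h'.symm
      rw [this]
      simp
    · refine le_trans (Finset.card_le_card ?_) (countV _ hbq)
      intro i hi
      simp only [Finset.mem_filter, Finset.mem_univ, true_and] at hi ⊢
      have h' : zlift q (c i) = b := hi
      have := zlift_cast q (c i)
      rw [← this, h']
  have countZ0 : (Finset.univ.filter (fun i => t i = 0)).card ≤ k - 1 := by
    refine le_trans (Finset.card_le_card ?_) count0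
    intro i hi
    simp only [Finset.mem_filter, Finset.mem_univ, true_and] at hi ⊢
    have h' : zlift q (c i) = 0 := hi
    have := zlift_cast q (c i)
    rw [← this, h']
    simp
  -- layer counting: number of coordinates with small absolute value
  have small : ∀ j : ℕ,
      (Finset.univ.filter (fun i => |t i| ≤ (j : ℤ))).card ≤ (2 * j + 1) * k - 1 := by
    intro j
    have hsub : (Finset.univ.filter (fun i => |t i| ≤ (j : ℤ))) ⊆
        (Finset.Icc (-(j : ℤ)) j).biUnion
          (fun b => Finset.univ.filter (fun i => t i = b)) := by
      intro i hi
      simp only [Finset.mem_filter, Finset.mem_univ, true_and] at hi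
      rw [Finset.mem_biUnion]
      exact ⟨t i, by
        rw [Finset.mem_Icc]
        exact ⟨neg_le_of_abs_le hi, le_of_abs_le hi⟩, by simp⟩
    refine le_trans (Finset.card_le_card hsub) ?_
    refine le_trans Finset.card_biUnion_le ?_
    have hsplit : (Finset.Icc (-(j : ℤ)) j) = insert 0 ((Finset.Icc (-(j : ℤ)) j).erase 0) := by
      rw [Finset.insert_erase]
      rw [Finset.mem_Icc]
      omega
    rw [hsplit, Finset.sum_insert (Finset.notMem_erase _ _)]
    have hmul : (2 * j + 1) * k = 2 * j * k + k := by ring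
    have hcard : ((Finset.Icc (-(j : ℤ)) j).erase 0).card = 2 * j := by
      rw [Finset.card_erase_of_mem (by rw [Finset.mem_Icc]; omega)]
      rw [Int.card_Icc]
      omega
    have hrest : ∑ b ∈ (Finset.Icc (-(j : ℤ)) j).erase 0,
        (Finset.univ.filter (fun i => t i = b)).card ≤ 2 * j * k := by
      calc ∑ b ∈ (Finset.Icc (-(j : ℤ)) j).erase 0,
            (Finset.univ.filter (fun i => t i = b)).card
          ≤ ((Finset.Icc (-(j : ℤ)) j).erase 0).card * k := by
            apply Finset.sum_le_card_nsmul
            intro b hb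
            exact countZ b (Finset.ne_of_mem_erase hb)
        _ = 2 * j * k := by rw [hcard]
    generalize hA : 2 * j * k = A at hmul hrest
    generalize hB : (2 * j + 1) * k = B at hmul ⊢
    omega
  have large : ∀ j : ℕ,
      ((n : ℤ) + 1) - (2 * (j : ℤ) + 1) * k ≤
        ((Finset.univ.filter (fun i => (j : ℤ) + 1 ≤ |t i|)).card : ℤ) := by
    intro j
    have hpart : (Finset.univ.filter (fun i => (j : ℤ) + 1 ≤ |t i|)).card +
        (Finset.univ.filter (fun i => ¬ ((j : ℤ) + 1 ≤ |t i|))).card = n := by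
      rw [Finset.card_filter_add_card_filter_not]
      simp
    have heq : (Finset.univ.filter (fun i => ¬ ((j : ℤ) + 1 ≤ |t i|))) =
        (Finset.univ.filter (fun i => |t i| ≤ (j : ℤ))) := by
      apply Finset.filter_congr
      intro i _
      constructor
      · intro h; omega
      · intro h; omega
    rw [heq] at hpart
    have hsm := small j
    have hk' : 1 ≤ (2 * j + 1) * k :=
      Nat.one_le_iff_ne_zero.mpr (Nat.mul_ne_zero (by omega) (by omega))
    have hsm' : (Finset.univ.filter (fun i => |t i| ≤ (j : ℤ))).card + 1 ≤ (2 * j + 1) * k := by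
      generalize hB : (2 * j + 1) * k = B at hsm hk' ⊢
      omega
    have hcast : (((2 * j + 1) * k : ℕ) : ℤ) = (2 * (j : ℤ) + 1) * (k : ℤ) := by
      push_cast; ring
    have hpart' : ((Finset.univ.filter (fun i => (j : ℤ) + 1 ≤ |t i|)).card : ℤ) +
        ((Finset.univ.filter (fun i => |t i| ≤ (j : ℤ))).card : ℤ) = (n : ℤ) := by
      exact_mod_cast hpart
    have hsm'' : ((Finset.univ.filter (fun i => |t i| ≤ (j : ℤ))).card : ℤ) + 1 ≤
        (2 * (j : ℤ) + 1) * (k : ℤ) := by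
      rw [← hcast]; exact_mod_cast hsm'
    linarith
  -- choose the cut-off m
  set N : ℕ := n + 1 with hN
  set m : ℕ := (N + k - 1) / (2 * k) with hm
  have hmm : N ≤ 2 * k * m + k ∧ 2 * k * m ≤ N + k := by
    obtain ⟨r, hr, hsum⟩ : ∃ r, r < 2 * k ∧ 2 * k * m + r = N + k - 1 :=
      ⟨_, Nat.mod_lt _ (by omega), Nat.div_add_mod _ _⟩
    have hNk : k + 1 ≤ N := by omega
    generalize 2 * k * m = P at hsum ⊢
    omega
  have hm1 : n + 1 ≤ 2 * k * m + k := by rw [← hN]; exact hmm.1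
  have hm2 : 2 * k * m ≤ n + 1 + k := by rw [← hN]; exact hmm.2
  have hm1R : ((n : ℝ) + 1) - (k : ℝ) ≤ 2 * (k : ℝ) * (m : ℝ) := by
    have h' : ((n : ℝ) + 1) ≤ 2 * (k : ℝ) * (m : ℝ) + (k : ℝ) := by exact_mod_cast hm1
    linarith
  have hm2R : 2 * (k : ℝ) * (m : ℝ) ≤ ((n : ℝ) + 1) + (k : ℝ) := by exact_mod_cast hm2
  -- the main chain of inequalities, in ℤ
  have chain : (∑ j ∈ Finset.range m,
      (2 * (j : ℤ) + 1) * (((n : ℤ) + 1) - (2 * (j : ℤ) + 1) * k)) ≤ ∑ i, (t i) ^ 2 := by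
    have step1 : (∑ j ∈ Finset.range m,
        (2 * (j : ℤ) + 1) * (((n : ℤ) + 1) - (2 * (j : ℤ) + 1) * k)) ≤
        ∑ j ∈ Finset.range m, (2 * (j : ℤ) + 1) *
          ((Finset.univ.filter (fun i => (j : ℤ) + 1 ≤ |t i|)).card : ℤ) := by
      apply Finset.sum_le_sum
      intro j _
      apply mul_le_mul_of_nonneg_left (large j) (by positivity)
    refine le_trans step1 ?_
    have step2 : ∀ j ∈ Finset.range m, (2 * (j : ℤ) + 1) *
        ((Finset.univ.filter (fun i => (j : ℤ) + 1 ≤ |t i|)).card : ℤ) =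
        ∑ i, (if (j : ℤ) + 1 ≤ |t i| then (2 * (j : ℤ) + 1) else 0) := by
      intro j _
      rw [Finset.sum_ite, Finset.sum_const, Finset.sum_const_zero, add_zero,
        nsmul_eq_mul, mul_comm]
    rw [Finset.sum_congr rfl step2, Finset.sum_comm]
    apply Finset.sum_le_sum
    intro i _
    exact layer_sum_le_sq m (t i)
  -- put everything together over ℝ
  have hk0 : (0 : ℝ) < k := by exact_mod_cast hk1
  have hn0 : (0 : ℝ) < n := by
    have : 0 < n := by omega
    exact_mod_cast this
  have hNk : (k : ℝ) ≤ (n : ℝ) + 1 := by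
    have : (k : ℝ) ≤ (n : ℝ) := by exact_mod_cast hkn
    linarith
  constructor
  · -- main inequality
    have hreal : Finset.univ.sum (fun i => ((t i : ℝ)) ^ 2) =
        ((∑ i, (t i) ^ 2 : ℤ) : ℝ) := by push_cast; rfl
    have hchainR : (∑ j ∈ Finset.range m,
        (2 * (j : ℝ) + 1) * (((n : ℝ) + 1) - (2 * (j : ℝ) + 1) * (k : ℝ))) ≤
        ∑ i, ((t i : ℝ)) ^ 2 := by
      rw [hreal]
      have := chain
      calc (∑ j ∈ Finset.range m,
            (2 * (j : ℝ) + 1) * (((n : ℝ) + 1) - (2 * (j : ℝ) + 1) * (k : ℝ)))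
          = ((∑ j ∈ Finset.range m,
            (2 * (j : ℤ) + 1) * (((n : ℤ) + 1) - (2 * (j : ℤ) + 1) * k) : ℤ) : ℝ) := by
            push_cast; rfl
        _ ≤ _ := by exact_mod_cast chain
    rw [sum_closed_form ((n : ℝ) + 1) (k : ℝ) m] at hchainR
    have hmain : ((n : ℝ) + 1) * (((n : ℝ) + 1) ^ 2 - (k : ℝ) ^ 2) / (12 * (k : ℝ) ^ 2) ≤
        ((n : ℝ) + 1) * (m : ℝ) ^ 2 -
          (k : ℝ) * (m : ℝ) * (4 * (m : ℝ) ^ 2 - 1) / 3 := by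
      exact real_min_ineq _ _ _ hk0 hNk hm1R hm2R
    calc (((n : ℝ) + 1) ^ 2 - (k : ℝ) ^ 2) / (12 * (k : ℝ) ^ 2) * ((n : ℝ) + 1)
        = ((n : ℝ) + 1) * (((n : ℝ) + 1) ^ 2 - (k : ℝ) ^ 2) / (12 * (k : ℝ) ^ 2) := by ring
      _ ≤ ((n : ℝ) + 1) * (m : ℝ) ^ 2 -
          (k : ℝ) * (m : ℝ) * (4 * (m : ℝ) ^ 2 - 1) / 3 := hmain
      _ ≤ ∑ i, ((t i : ℝ)) ^ 2 := hchainR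
  · -- strict inequality between the two bounds
    have hkn' : (k : ℝ) ≤ (n : ℝ) := by exact_mod_cast hkn
    have hL : (1 - ((k : ℝ) / (n : ℝ)) ^ 2) / (12 * ((k : ℝ) / (n : ℝ)) ^ 2) * (n : ℝ)
        = ((n : ℝ) ^ 2 - (k : ℝ) ^ 2) * (n : ℝ) / (12 * (k : ℝ) ^ 2) := by
      field_simp
    have hR : (((n : ℝ) + 1) ^ 2 - (k : ℝ) ^ 2) / (12 * (k : ℝ) ^ 2) * ((n : ℝ) + 1)
        = (((n : ℝ) + 1) ^ 2 - (k : ℝ) ^ 2) * ((n : ℝ) + 1) / (12 * (k : ℝ) ^ 2) := by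
      ring
    rw [hL, hR, div_lt_div_iff₀ (by positivity) (by positivity)]
    have hD : (0 : ℝ) < 3 * (n : ℝ) ^ 2 + 3 * (n : ℝ) + 1 - (k : ℝ) ^ 2 := by nlinarith
    have h12 : (0 : ℝ) < 12 * (k : ℝ) ^ 2 := by positivity
    nlinarith [mul_pos h12 hD]

end
end

section
/- Worst-case ℓ₂ rate bound at the optimal scaling: Let f(x) = exp(−πx²) be the Gaussian, extended multiplicatively to ℝ². For any δ > √(ln 4)/(2π) and any prime q ≥ 4πδ², setting s := δ√(4π), it holds that W^(2)_{q,δ}(s)² := exp(−2πδ²/s²)/f_s(L_q) > (1/(δ√(2πe)))·E_q(δ√(4π))², where L_q := ∪_{z∈ℤ}((z,z) + qℤ²), E(r) := 1 − 2exp(−πr²/2), and E_q(s) := √(E(q/s)·E(s)). -/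
noncomputable section

namespace WCL2Aux
open Real


lemma summable_nat_gauss (b t : ℝ) (hb : 0 < b) :
    Summable (fun n : ℕ => rexp (-b * ((n : ℝ) + t) ^ 2)) := by
  have hr : rexp (-(b/2)) < 1 := exp_lt_one_iff.mpr (by linarith)
  apply Summable.of_nonneg_of_le (f := fun n : ℕ => rexp (b * t ^ 2) * rexp (-(b/2)) ^ n)
    (fun n => (exp_pos _).le)
  · intro n
    rw [← Real.exp_nat_mul, ← Real.exp_add]
    apply Real.exp_le_exp.mpr
    have h1 : ((n : ℝ) + 2*t)^2 ≥ 0 := sq_nonneg _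
    have h2 : (n : ℝ) ≤ (n:ℝ)^2 := by
      have : (1:ℝ) ≤ n ∨ (n:ℝ) = 0 := by
        rcases Nat.eq_zero_or_pos n with h | h
        · right; simp [h]
        · left; exact_mod_cast h
      rcases this with h | h
      · nlinarith
      · simp [h]
    nlinarith
  · exact (summable_geometric_of_lt_one (exp_pos _).le hr).mul_left _

lemma summable_int_gauss (b t : ℝ) (hb : 0 < b) :
    Summable (fun n : ℤ => rexp (-b * ((n : ℝ) + t) ^ 2)) := by
  apply Summable.of_nat_of_neg_add_one
  · exact_mod_cast summable_nat_gauss b t hb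
  · have := summable_nat_gauss b (1 - t) hb
    apply this.congr
    intro n
    push_cast
    ring_nf

lemma summable_int_gauss' (c : ℝ) (hc : 0 < c) :
    Summable (fun n : ℤ => rexp (-c * (n : ℝ) ^ 2)) := by
  have := summable_int_gauss c 0 hc
  simpa using this

lemma tsum_gauss_poisson (a : ℝ) (ha : 0 < a) :
    ∑' n : ℤ, rexp (-π * a * (n : ℝ) ^ 2) =
      (1 / Real.sqrt a) * ∑' n : ℤ, rexp (-(π / a) * (n : ℝ) ^ 2) := by
  have h := Real.tsum_exp_neg_mul_int_sq ha
  rw [Real.sqrt_eq_rpow]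
  rw [show (fun n : ℤ => rexp (-(π / a) * (n : ℝ) ^ 2)) = fun n : ℤ => rexp (-π / a * (n : ℝ) ^ 2)
    by funext n; ring_nf]
  exact h

open Complex in
lemma tsum_gauss_half_poisson (a : ℝ) (ha : 0 < a) :
    ∑' n : ℤ, rexp (-π * a * ((n : ℝ) + 1/2) ^ 2) =
      (1 / Real.sqrt a) * ∑' n : ℤ, ((-1 : ℝ) ^ n * rexp (-(π / a) * (n : ℝ) ^ 2)) := by
  have ha' : (0:ℝ) < ((a : ℂ)).re := by simpa using ha
  have key := Complex.tsum_exp_neg_quadratic ha' (-(a : ℂ)/2)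
  have hL : ∑' n : ℤ, cexp (-π * a * (n:ℂ) ^ 2 + 2 * π * (-(a:ℂ)/2) * n) =
      cexp (π * a / 4) * ∑' n : ℤ, ((rexp (-π * a * ((n:ℝ) + 1/2) ^ 2) : ℂ)) := by
    rw [← tsum_mul_left]
    congr 1; funext n
    rw [Complex.ofReal_exp, ← Complex.exp_add]
    congr 1
    push_cast
    ring
  have hR : ∑' n : ℤ, cexp (-(π:ℂ) / a * ((n:ℂ) + I * (-(a:ℂ)/2)) ^ 2) =
      cexp (π * a / 4) * ∑' n : ℤ, (((-1 : ℝ) ^ n * rexp (-(π / a) * (n:ℝ) ^ 2) : ℝ) : ℂ) := by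
    rw [← tsum_mul_left]
    congr 1; funext n
    have h1 : (((-1 : ℝ) ^ n * rexp (-(π / a) * (n:ℝ) ^ 2) : ℝ) : ℂ)
        = cexp ((n:ℂ) * (π * I)) * cexp ((-(π/a) * (n:ℝ)^2 : ℝ) : ℂ) := by
      rw [Complex.exp_int_mul, Complex.exp_pi_mul_I, ← Complex.ofReal_exp]
      push_cast
      ring
    rw [h1, ← Complex.exp_add, ← Complex.exp_add]
    congr 1
    have haC : (a : ℂ) ≠ 0 := by exact_mod_cast ha.ne'
    push_cast
    field_simp
    ring_nf
    rw [Complex.I_sq]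
    ring
  rw [hL, hR] at key
  have hcpow : ((a : ℂ)) ^ (1/2 : ℂ) = ((Real.sqrt a : ℝ) : ℂ) := by
    rw [Real.sqrt_eq_rpow, Complex.ofReal_cpow ha.le]
    norm_num
  rw [hcpow] at key
  rw [← Complex.ofReal_tsum, ← Complex.ofReal_tsum] at key
  rw [show (1:ℂ) / ((Real.sqrt a : ℝ) : ℂ) *
      (cexp (π * a / 4) * ((∑' n : ℤ, ((-1 : ℝ) ^ n * rexp (-(π / a) * (n:ℝ) ^ 2)) : ℝ)) : ℂ) =
      cexp (π * a / 4) * ((1 / ((Real.sqrt a : ℝ) : ℂ)) *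
        ((∑' n : ℤ, ((-1 : ℝ) ^ n * rexp (-(π / a) * (n:ℝ) ^ 2)) : ℝ) : ℂ)) from by ring] at key
  have key2 := mul_left_cancel₀ (Complex.exp_ne_zero ((π : ℂ) * a / 4)) key
  exact_mod_cast key2

lemma tsum_gauss_half_le (a : ℝ) (ha : 0 < a) :
    ∑' n : ℤ, rexp (-π * a * ((n : ℝ) + 1/2) ^ 2) ≤ ∑' n : ℤ, rexp (-π * a * (n : ℝ) ^ 2) := by
  have hπa : 0 < π / a := div_pos pi_pos ha
  rw [tsum_gauss_half_poisson a ha, tsum_gauss_poisson a ha]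
  apply mul_le_mul_of_nonneg_left _ (by positivity)
  apply Summable.tsum_le_tsum _ _ (summable_int_gauss' (π/a) hπa)
  · intro n
    have h1 : ((-1:ℝ) ^ n) ≤ 1 := by
      rcases Int.even_or_odd n with h | h
      · rw [h.neg_one_zpow]
      · rw [h.neg_one_zpow]; norm_num
    exact mul_le_of_le_one_left (exp_pos _).le h1
  · apply Summable.of_norm_bounded (summable_int_gauss' (π/a) hπa)
    intro n
    rw [norm_mul]
    simp [abs_of_pos (exp_pos _)]

lemma tsum_gauss_lt (c : ℝ) (hc : 0 < c) (h2 : rexp (-c) < 1/2) :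
    ∑' n : ℤ, rexp (-c * (n : ℝ) ^ 2) < 1 / (1 - 2 * rexp (-c)) := by
  set x := rexp (-c) with hx
  have hx0 : 0 < x := exp_pos _
  have hx1 : x < 1 := by linarith
  have hnat : Summable (fun n : ℕ => rexp (-c * ((n : ℝ) + 1) ^ 2)) :=
    summable_nat_gauss c 1 hc
  have hgeom : Summable (fun n : ℕ => x ^ (n + 1)) :=
    ((summable_geometric_of_lt_one hx0.le hx1).mul_left x).congr (fun n => by rw [pow_succ]; ring)
  have hterm : ∀ n : ℕ, rexp (-c * ((n : ℝ) + 1) ^ 2) ≤ x ^ (n + 1) := by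
    intro n
    rw [hx, ← Real.exp_nat_mul]
    apply Real.exp_le_exp.mpr
    push_cast
    have h0 : (0:ℝ) ≤ n := Nat.cast_nonneg n
    have h1 : (n:ℝ) + 1 ≤ ((n:ℝ)+1)^2 := by nlinarith
    nlinarith [h1]
  have htail : ∑' n : ℕ, rexp (-c * ((n : ℝ) + 1) ^ 2) ≤ x / (1 - x) := by
    calc ∑' n : ℕ, rexp (-c * ((n : ℝ) + 1) ^ 2) ≤ ∑' n : ℕ, x ^ (n + 1) :=
          Summable.tsum_le_tsum hterm hnat hgeom
      _ = ∑' n : ℕ, x ^ n * x := tsum_congr (fun n => pow_succ x n)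
      _ = (∑' n : ℕ, x ^ n) * x := tsum_mul_right
      _ = (1 - x)⁻¹ * x := by rw [tsum_geometric_of_lt_one hx0.le hx1]
      _ = x * (1 - x)⁻¹ := mul_comm _ _
      _ = x / (1 - x) := by rw [div_eq_mul_inv]
  have hsplit : ∑' n : ℤ, rexp (-c * (n : ℝ) ^ 2) =
      (∑' n : ℕ, rexp (-c * (n : ℝ) ^ 2)) + ∑' n : ℕ, rexp (-c * ((n : ℝ) + 1) ^ 2) := by
    rw [tsum_of_nat_of_neg_add_one
      (by exact_mod_cast summable_nat_gauss c 0 hc |>.congr (fun n => by push_cast; ring_nf))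
      (by exact hnat.congr (fun n => by push_cast; ring_nf))]
    congr 1
    apply tsum_congr; intro n; push_cast; ring_nf
  have hznn : ∑' n : ℕ, rexp (-c * (n : ℝ) ^ 2) =
      1 + ∑' n : ℕ, rexp (-c * ((n : ℝ) + 1) ^ 2) := by
    rw [Summable.tsum_eq_zero_add (summable_nat_gauss c 0 hc |>.congr (fun n => by push_cast; ring_nf) :
      Summable (fun n : ℕ => rexp (-c * (n:ℝ)^2)))]
    simp only [Nat.cast_zero]
    norm_num
  have hbound : ∑' n : ℤ, rexp (-c * (n : ℝ) ^ 2) ≤ 1 + 2 * (x / (1 - x)) := by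
    rw [hsplit, hznn]; linarith
  have hfin : 1 + 2 * (x / (1 - x)) < 1 / (1 - 2 * x) := by
    have hden1 : (0:ℝ) < 1 - x := by linarith
    have hden2 : (0:ℝ) < 1 - 2 * x := by linarith
    have heq : 1 + 2 * (x / (1 - x)) = (1 + x) / (1 - x) := by field_simp; ring
    rw [heq, div_lt_div_iff₀ hden1 hden2]
    nlinarith
  linarith

lemma tsum_gauss_shift_le (a : ℝ) (ha : 0 < a) (j : ℤ) :
    ∑' n : ℤ, rexp (-π * a * ((n : ℝ) + (j : ℝ)/2) ^ 2) ≤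
      ∑' n : ℤ, rexp (-π * a * (n : ℝ) ^ 2) := by
  rcases Int.even_or_odd j with ⟨m, hm⟩ | ⟨m, hm⟩
  · have : ∑' n : ℤ, rexp (-π * a * ((n : ℝ) + (j : ℝ)/2) ^ 2)
        = ∑' n : ℤ, rexp (-π * a * (n : ℝ) ^ 2) := by
      rw [← (Equiv.addRight m).tsum_eq (fun n : ℤ => rexp (-π * a * (n : ℝ) ^ 2))]
      apply tsum_congr; intro n
      simp only [Equiv.coe_addRight]
      congr 2
      push_cast [hm]
      ring
    exact this.le
  · have : ∑' n : ℤ, rexp (-π * a * ((n : ℝ) + (j : ℝ)/2) ^ 2)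
        = ∑' n : ℤ, rexp (-π * a * ((n : ℝ) + 1/2) ^ 2) := by
      rw [← (Equiv.addRight m).tsum_eq (fun n : ℤ => rexp (-π * a * ((n : ℝ) + 1/2) ^ 2))]
      apply tsum_congr; intro n
      simp only [Equiv.coe_addRight]
      congr 2
      push_cast [hm]
      ring
    rw [this]
    exact tsum_gauss_half_le a ha



def latMap (q : ℕ) (p : ℤ × ℤ) : LqSet q :=
  ⟨((p.2 : ℝ), (p.2 : ℝ) + q * p.1), ⟨p.2, 0, p.1, by push_cast; ring, by push_cast; ring⟩⟩

lemma latMap_bijective (q : ℕ) (hq : 0 < q) : Function.Bijective (latMap q) := by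
  constructor
  · rintro ⟨k, a⟩ ⟨k', a'⟩ h
    rw [Subtype.ext_iff, Prod.ext_iff] at h
    obtain ⟨h1, h2⟩ := h
    simp only [latMap] at h1 h2
    have ha : a = a' := by exact_mod_cast h1
    subst ha
    have hq' : (q : ℝ) ≠ 0 := by positivity
    have : (q : ℝ) * k = q * k' := by linarith [h2]
    have hkk : (k : ℝ) = k' := mul_left_cancel₀ hq' this
    have : k = k' := by exact_mod_cast hkk
    simp [this]
  · rintro ⟨v, z, w₁, w₂, h1, h2⟩
    refine ⟨(w₂ - w₁, z + q * w₁), ?_⟩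
    apply Subtype.ext
    simp only [latMap]
    apply Prod.ext
    · simp only []
      rw [h1]; push_cast; ring
    · simp only []
      rw [h2]; push_cast; ring

def latEquiv (q : ℕ) (hq : 0 < q) : (ℤ × ℤ) ≃ LqSet q :=
  Equiv.ofBijective (latMap q) (latMap_bijective q hq)

/-- The summand on `ℤ × ℤ` after completing the square. -/
def Fp (q : ℕ) (s : ℝ) (p : ℤ × ℤ) : ℝ :=
  rexp (-π * ((q:ℝ)^2/(2*s^2)) * (p.1 : ℝ) ^ 2) *
    rexp (-π * (2/s^2) * ((p.2 : ℝ) + (q : ℝ) * (p.1 : ℝ)/2) ^ 2)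

lemma Fp_nonneg (q : ℕ) (s : ℝ) (p : ℤ × ℤ) : 0 ≤ Fp q s p := by
  unfold Fp; positivity

lemma Fp_pos (q : ℕ) (s : ℝ) (p : ℤ × ℤ) : 0 < Fp q s p := by
  unfold Fp; positivity

lemma fsLq_eq (q : ℕ) (hq : 0 < q) (s : ℝ) (hs : 0 < s) :
    fsLq gauss s q = ∑' p : ℤ × ℤ, Fp q s p := by
  rw [fsLq, ← (latEquiv q hq).tsum_eq
    (fun v : LqSet q => gauss ((v : ℝ × ℝ).1 / s) * gauss ((v : ℝ × ℝ).2 / s))]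
  apply tsum_congr
  rintro ⟨k, a⟩
  simp only [latEquiv, Equiv.ofBijective_apply, latMap, gauss, Fp]
  rw [← Real.exp_add, ← Real.exp_add]
  congr 1
  have hs' : s ≠ 0 := hs.ne'
  field_simp
  ring

end WCL2Aux

set_option maxHeartbeats 2000000 in
open WCL2Aux Real in
/-- Worst-case ℓ₂ rate bound at the optimal scaling `s = δ√(4π)`: for
`δ > √(ln 4)/(2π)` and prime `q ≥ 4πδ²`,
`W^(2)_{q,δ}(s)² = exp(−2πδ²/s²)/f_s(L_q) > (1/(δ√(2πe)))·E_q(δ√(4π))²`. -/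
theorem worst_case_ell2_rate (δ : ℝ) (hδ : Real.sqrt (Real.log 4) / (2 * Real.pi) < δ)
    (q : ℕ) (hq : Nat.Prime q) (hq₂ : 4 * Real.pi * δ ^ 2 ≤ (q : ℝ))
    (s : ℝ) (hs : s = δ * Real.sqrt (4 * Real.pi)) :
    Real.exp (-(2 * Real.pi * δ ^ 2) / s ^ 2) / fsLq gauss s q >
      1 / (δ * Real.sqrt (2 * Real.pi * Real.exp 1)) * Egq q (δ * Real.sqrt (4 * Real.pi)) ^ 2 := by
  have hπ := Real.pi_pos
  have hδ0 : 0 < δ := lt_of_le_of_lt (by positivity) hδ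
  have h4π : (0:ℝ) < 4 * π := by linarith
  have hs0 : 0 < s := by rw [hs]; positivity
  have hs' : s ≠ 0 := hs0.ne'
  have hs2 : s ^ 2 = 4 * π * δ ^ 2 := by
    rw [hs, mul_pow, Real.sq_sqrt h4π.le]; ring
  have hq0 : 0 < q := hq.pos
  have hqR : (0:ℝ) < q := by exact_mod_cast hq0
  have hb₁0 : (0:ℝ) < 2 / s^2 := by positivity
  have hβ0 : (0:ℝ) < (q:ℝ)^2 / (2*s^2) := by positivity
  -- log bound: log 2 < π s² / 2
  have hlog4 : (0:ℝ) ≤ Real.log 4 := Real.log_nonneg (by norm_num)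
  have hδsq : Real.log 4 / (4 * π^2) < δ^2 := by
    have h1 : Real.sqrt (Real.log 4) / (2*π) < δ := hδ
    have h2 : (Real.sqrt (Real.log 4) / (2*π))^2 < δ^2 := by
      apply pow_lt_pow_left₀ h1 (by positivity) (by norm_num)
    rwa [div_pow, Real.sq_sqrt hlog4, show ((2*π)^2 : ℝ) = 4*π^2 by ring] at h2
  have hlog : Real.log 2 < π * s^2 / 2 := by
    have h42 : Real.log 4 = 2 * Real.log 2 := by
      rw [show (4:ℝ) = 2^2 by norm_num, Real.log_pow]; push_cast; ring
    have : Real.log 4 < 4 * π^2 * δ^2 := by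
      have := (div_lt_iff₀ (by positivity : (0:ℝ) < 4*π^2)).mp hδsq
      linarith [this]
    rw [hs2]; rw [h42] at this; nlinarith
  -- exponential bounds
  have hEs_exp : rexp (-(π * s^2 / 2)) < 1/2 := by
    calc rexp (-(π * s^2/2)) < rexp (-(Real.log 2)) := Real.exp_lt_exp.mpr (by linarith)
      _ = 1/2 := by
          rw [Real.exp_neg, Real.exp_log (by norm_num : (0:ℝ) < 2)]
          norm_num
  have hq_ge : s^2 ≤ (q:ℝ) := by rw [hs2]; exact hq₂
  have hββ : π * s^2 / 2 ≤ π * ((q:ℝ)^2 / (2*s^2)) := by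
    have h1 : s^2 * s^2 ≤ (q:ℝ) * (q:ℝ) :=
      mul_le_mul hq_ge hq_ge (sq_nonneg s) hqR.le
    rw [← mul_div_assoc,
      div_le_div_iff₀ (by norm_num : (0:ℝ) < 2) (by positivity : (0:ℝ) < 2*s^2)]
    nlinarith [h1, hπ]
  have hEq_exp : rexp (-(π * ((q:ℝ)^2 / (2*s^2)))) < 1/2 :=
    lt_of_le_of_lt (Real.exp_le_exp.mpr (by linarith)) hEs_exp
  -- Eg identifications and positivity
  have hEgs : Eg s = 1 - 2 * rexp (-(π * s^2 / 2)) := by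
    rw [Eg]; congr 2; ring
  have hEgqs : Eg ((q:ℝ)/s) = 1 - 2 * rexp (-(π * ((q:ℝ)^2 / (2*s^2)))) := by
    rw [Eg]; congr 2; field_simp
  have hEgs0 : 0 < Eg s := by rw [hEgs]; linarith
  have hEgq0 : 0 < Eg ((q:ℝ)/s) := by rw [hEgqs]; linarith
  have hπb₁ : (0:ℝ) < π * (2/s^2) := by positivity
  have hπβ : (0:ℝ) < π * ((q:ℝ)^2 / (2*s^2)) := by positivity
  -- summability facts
  have hfiber : ∀ k : ℤ, Summable (fun a : ℤ => Fp q s (k, a)) := by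
    intro k
    unfold Fp
    simp only
    apply Summable.mul_left
    exact (summable_int_gauss (π * (2/s^2)) ((q:ℝ)*(k:ℝ)/2) hπb₁).congr
      (fun a => by ring_nf)
  -- T and U
  set T : ℝ := ∑' a : ℤ, rexp (-π * (2/s^2) * (a : ℝ) ^ 2) with hT
  set U : ℝ := ∑' k : ℤ, rexp (-π * ((q:ℝ)^2 / (2*s^2)) * (k : ℝ) ^ 2) with hU
  have hTsummable : Summable (fun a : ℤ => rexp (-π * (2/s^2) * (a : ℝ) ^ 2)) :=
    (summable_int_gauss' (π * (2/s^2)) hπb₁).congr (fun a => by ring_nf)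
  have hUsummable : Summable (fun k : ℤ => rexp (-π * ((q:ℝ)^2 / (2*s^2)) * (k : ℝ) ^ 2)) :=
    (summable_int_gauss' (π * ((q:ℝ)^2 / (2*s^2))) hπβ).congr (fun a => by ring_nf)
  have hT_pos : 0 < T := by
    rw [hT]
    exact Summable.tsum_pos hTsummable (fun a => (exp_pos _).le) 0 (exp_pos _)
  have hU_pos : 0 < U := by
    rw [hU]
    exact Summable.tsum_pos hUsummable (fun a => (exp_pos _).le) 0 (exp_pos _)
  -- inner sums bounded by weight * T
  have hS_le : ∀ k : ℤ, ∑' a : ℤ, Fp q s (k, a) ≤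
      rexp (-π * ((q:ℝ)^2 / (2*s^2)) * (k : ℝ) ^ 2) * T := by
    intro k
    unfold Fp
    simp only
    rw [tsum_mul_left]
    apply mul_le_mul_of_nonneg_left _ (exp_pos _).le
    rw [hT]
    have h6 := tsum_gauss_shift_le (2/s^2) (by positivity) ((q : ℤ) * k)
    have h7 : ((((q : ℤ) * k : ℤ)):ℝ) = (q:ℝ) * (k:ℝ) := by push_cast; ring
    simpa only [h7] using h6
  have hsums_summable : Summable (fun k : ℤ => ∑' a : ℤ, Fp q s (k, a)) := by
    apply Summable.of_nonneg_of_le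
      (fun k => tsum_nonneg (fun a => Fp_nonneg q s (k, a))) hS_le
    exact hUsummable.mul_right T
  have hFsummable : Summable (Fp q s) :=
    (summable_prod_of_nonneg (fun p => Fp_nonneg q s p)).mpr ⟨hfiber, hsums_summable⟩
  -- fsLq value
  have hfs_eq : fsLq gauss s q = ∑' p : ℤ × ℤ, Fp q s p := fsLq_eq q hq0 s hs0
  have hfs_pos : 0 < fsLq gauss s q := by
    rw [hfs_eq]
    exact Summable.tsum_pos hFsummable (Fp_nonneg q s) (0, 0) (Fp_pos q s (0, 0))
  have hfs_le : fsLq gauss s q ≤ U * T := by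
    rw [hfs_eq, Summable.tsum_prod' hFsummable hfiber]
    calc ∑' k : ℤ, ∑' a : ℤ, Fp q s (k, a)
        ≤ ∑' k : ℤ, rexp (-π * ((q:ℝ)^2 / (2*s^2)) * (k : ℝ) ^ 2) * T :=
          Summable.tsum_le_tsum hS_le hsums_summable (hUsummable.mul_right T)
      _ = U * T := by rw [hU, tsum_mul_right]
  -- Poisson + geometric bounds
  have hT_lt : T < s / Real.sqrt 2 * (1 / Eg s) := by
    have h1 : T = (1 / Real.sqrt (2/s^2)) * ∑' n : ℤ, rexp (-(π / (2/s^2)) * (n : ℝ) ^ 2) := by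
      rw [hT]; exact tsum_gauss_poisson (2/s^2) hb₁0
    have h2 : π / (2/s^2) = π * s^2 / 2 := by field_simp
    have h3 : ∑' n : ℤ, rexp (-(π / (2/s^2)) * (n : ℝ) ^ 2) < 1 / Eg s := by
      rw [h2, hEgs]
      exact tsum_gauss_lt (π * s^2 / 2) (by positivity) hEs_exp
    have h4 : 1 / Real.sqrt (2/s^2) = s / Real.sqrt 2 := by
      rw [show (2:ℝ)/s^2 = (Real.sqrt 2 / s)^2 by
        rw [div_pow, Real.sq_sqrt (by norm_num : (0:ℝ) ≤ 2)],
        Real.sqrt_sq (by positivity)]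
      field_simp
    rw [h1, h4]
    exact mul_lt_mul_of_pos_left h3 (by positivity)
  have hU_lt : U < 1 / Eg ((q:ℝ)/s) := by
    have hcongr : ∑' k : ℤ, rexp (-π * ((q:ℝ)^2 / (2*s^2)) * (k : ℝ) ^ 2)
        = ∑' k : ℤ, rexp (-(π * ((q:ℝ)^2 / (2*s^2))) * (k : ℝ) ^ 2) :=
      tsum_congr (fun k => by ring_nf)
    rw [hU, hcongr, hEgqs]
    exact tsum_gauss_lt (π * ((q:ℝ)^2 / (2*s^2))) hπβ hEq_exp
  -- combine
  have hB_pos : (0:ℝ) < s / Real.sqrt 2 * (1 / Eg s) := by positivity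
  have hfs_lt : fsLq gauss s q < (1 / Eg ((q:ℝ)/s)) * (s / Real.sqrt 2 * (1 / Eg s)) := by
    calc fsLq gauss s q ≤ U * T := hfs_le
      _ < U * (s / Real.sqrt 2 * (1 / Eg s)) := mul_lt_mul_of_pos_left hT_lt hU_pos
      _ ≤ (1 / Eg ((q:ℝ)/s)) * (s / Real.sqrt 2 * (1 / Eg s)) :=
          mul_le_mul_of_nonneg_right hU_lt.le hB_pos.le
  -- final algebra
  have hexp : -(2 * π * δ ^ 2) / s ^ 2 = -(1/2) := by
    rw [hs2, div_eq_iff (by positivity : (4 * π * δ^2 : ℝ) ≠ 0)]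
    ring
  have hEgq2 : Egq q (δ * Real.sqrt (4 * π)) ^ 2 = Eg ((q:ℝ)/s) * Eg s := by
    rw [Egq, ← hs, Real.sq_sqrt (mul_nonneg hEgq0.le hEgs0.le)]
  rw [hexp, hEgq2, gt_iff_lt, lt_div_iff₀ hfs_pos]
  have hsqrtE : Real.sqrt (rexp 1) = rexp (1/2) := by
    rw [show rexp 1 = rexp (1/2) ^ 2 by rw [sq, ← Real.exp_add]; norm_num]
    exact Real.sqrt_sq (exp_pos _).le
  have h2πe : Real.sqrt (2 * π * rexp 1) = Real.sqrt (2*π) * rexp (1/2) := by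
    rw [Real.sqrt_mul (by positivity : (0:ℝ) ≤ 2*π), hsqrtE]
  have h4πsplit : Real.sqrt (4 * π) = Real.sqrt 2 * Real.sqrt (2*π) := by
    rw [show (4:ℝ)*π = 2*(2*π) by ring, Real.sqrt_mul (by norm_num : (0:ℝ) ≤ 2)]
  have hexp_half : rexp (-(1/2)) = (rexp (1/2))⁻¹ := Real.exp_neg _
  have key : 1 / (δ * Real.sqrt (2 * π * rexp 1)) * (Eg ((q:ℝ)/s) * Eg s) *
      ((1 / Eg ((q:ℝ)/s)) * (s / Real.sqrt 2 * (1 / Eg s))) = rexp (-(1/2)) := by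
    have hsq2 : Real.sqrt 2 ≠ 0 := by positivity
    have hsq2π : Real.sqrt (2*π) ≠ 0 := by positivity
    have hre : rexp (1/2) ≠ 0 := (exp_pos _).ne'
    have hsplit2 : s / Real.sqrt 2 = δ * Real.sqrt (2*π) := by
      rw [hs, h4πsplit]
      field_simp
    rw [hsplit2, h2πe, hexp_half]
    field_simp [hEgq0.ne', hEgs0.ne', hδ0.ne']
  calc 1 / (δ * Real.sqrt (2 * π * rexp 1)) * (Eg ((q:ℝ)/s) * Eg s) * fsLq gauss s q
      < 1 / (δ * Real.sqrt (2 * π * rexp 1)) * (Eg ((q:ℝ)/s) * Eg s) *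
        ((1 / Eg ((q:ℝ)/s)) * (s / Real.sqrt 2 * (1 / Eg s))) := by
        apply mul_lt_mul_of_pos_left hfs_lt
        have h0 : (0:ℝ) < 1 / (δ * Real.sqrt (2 * π * rexp 1)) := by positivity
        exact mul_pos h0 (mul_pos hEgq0 hEgs0)
    _ = rexp (-(1/2)) := key
end
end
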